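/- The provability relations of CLKID^ω and CLKID^ω_a coincide: a sequent Γ ⊢ Δ is provable in CLKID^ω if and only if it is provable in CLKID^ω_a. -/

import Mathlib

namespace CLKID

/-- Terms of the language: variables, the constant `0`, and the unary function `s`. -/
inductive Tm : Type where
  | var : ℕ → Tm
  | zero : Tm
  | s : Tm → Tm
deriving DecidableEq

/-- `sIter n t` is the term `s^n t`. -/
def sIter : ℕ → Tm → Tm
  | 0, t => t
  | n + 1, t => Tm.s (sIter n t)

/-- Substitution on terms. -/
def Tm.subst (θ : ℕ → Tm) : Tm → Tm
  | .var x => θ x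
  | .zero => .zero
  | .s t => .s (t.subst θ)

/-- Free variables of a term. -/
def Tm.fv : Tm → Set ℕ
  | .var x => {x}
  | .zero => ∅
  | .s t => t.fv

/-- Subterms of a term. -/
def Tm.sub : Tm → Set Tm
  | .var x => {Tm.var x}
  | .zero => {Tm.zero}
  | .s t => insert (Tm.s t) t.sub

/-- The variable of a term (`none` if the term is of the form `s^n 0`). -/
def Tm.varOf : Tm → Option ℕ
  | .var x => some x
  | .zero => none
  | .s t => t.varOf

/-- Formulas: equations, the two inductive-predicate atoms `Add1`/`Add2`,
    and the usual first-order connectives and quantifiers. -/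
inductive Fm : Type where
  | eq : Tm → Tm → Fm
  | add1 : Tm → Tm → Tm → Fm
  | add2 : Tm → Tm → Tm → Fm
  | not : Fm → Fm
  | and : Fm → Fm → Fm
  | or : Fm → Fm → Fm
  | imp : Fm → Fm → Fm
  | all : ℕ → Fm → Fm
  | ex : ℕ → Fm → Fm
deriving DecidableEq

/-- Substitution on formulas. -/
def Fm.subst (θ : ℕ → Tm) : Fm → Fm
  | .eq t u => .eq (t.subst θ) (u.subst θ)
  | .add1 a b c => .add1 (a.subst θ) (b.subst θ) (c.subst θ)
  | .add2 a b c => .add2 (a.subst θ) (b.subst θ) (c.subst θ)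
  | .not φ => .not (φ.subst θ)
  | .and φ ψ => .and (φ.subst θ) (ψ.subst θ)
  | .or φ ψ => .or (φ.subst θ) (ψ.subst θ)
  | .imp φ ψ => .imp (φ.subst θ) (ψ.subst θ)
  | .all x φ => .all x (φ.subst (Function.update θ x (Tm.var x)))
  | .ex x φ => .ex x (φ.subst (Function.update θ x (Tm.var x)))

/-- Free variables of a formula. -/
def Fm.fv : Fm → Set ℕ
  | .eq t u => t.fv ∪ u.fv
  | .add1 a b c => a.fv ∪ b.fv ∪ c.fv
  | .add2 a b c => a.fv ∪ b.fv ∪ c.fv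
  | .not φ => φ.fv
  | .and φ ψ => φ.fv ∪ ψ.fv
  | .or φ ψ => φ.fv ∪ ψ.fv
  | .imp φ ψ => φ.fv ∪ ψ.fv
  | .all x φ => φ.fv \ {x}
  | .ex x φ => φ.fv \ {x}

/-- Terms occurring in a formula. -/
def Fm.tms : Fm → Set Tm
  | .eq t u => t.sub ∪ u.sub
  | .add1 a b c => a.sub ∪ b.sub ∪ c.sub
  | .add2 a b c => a.sub ∪ b.sub ∪ c.sub
  | .not φ => φ.tms
  | .and φ ψ => φ.tms ∪ ψ.tms
  | .or φ ψ => φ.tms ∪ ψ.tms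
  | .imp φ ψ => φ.tms ∪ ψ.tms
  | .all _ φ => φ.tms
  | .ex _ φ => φ.tms

/-- The substitution `[x := t]`. -/
def sub1 (x : ℕ) (t : Tm) : ℕ → Tm := fun y => if y = x then t else Tm.var y

/-- The simultaneous substitution `[v1 := t, v2 := u]`. -/
def sub2 (v1 v2 : ℕ) (t u : Tm) : ℕ → Tm :=
  fun z => if z = v1 then t else if z = v2 then u else Tm.var z

/-- `≡_Γ`: the smallest congruence relation on terms containing all pairs `(t, u)`
    with the equation `t = u` in `Γ`. -/
inductive EqvTm (Γ : Set Fm) : Tm → Tm → Prop where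
  | base {t u : Tm} : Fm.eq t u ∈ Γ → EqvTm Γ t u
  | refl (t : Tm) : EqvTm Γ t t
  | symm {t u : Tm} : EqvTm Γ t u → EqvTm Γ u t
  | trans {t u v : Tm} : EqvTm Γ t u → EqvTm Γ u v → EqvTm Γ t v
  | sCongr {t u : Tm} : EqvTm Γ t u → EqvTm Γ (Tm.s t) (Tm.s u)

/-- `t ~_Γ u` : `s^n t ≡_Γ s^m u` for some naturals `n`, `m`. -/
def DepTm (Γ : Set Fm) (t u : Tm) : Prop := ∃ n m : ℕ, EqvTm Γ (sIter n t) (sIter m u)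

/-- A sequent: a pair of finite sets of formulas. -/
structure Seq where
  ant : Finset Fm
  suc : Finset Fm

/-- The antecedent of a sequent, as a set of formulas. -/
def antSet (S : Seq) : Set Fm := ↑S.ant

/-- `[Γ]` from Lemma on chains: `{ s^n t1 = s^n t2 | t1 = t2 ∈ Γ or t2 = t1 ∈ Γ }`. -/
def brkt (Γ : Set Fm) : Set Fm :=
  {φ | ∃ (n : ℕ) (t1 t2 : Tm), φ = Fm.eq (sIter n t1) (sIter n t2) ∧
        (Fm.eq t1 t2 ∈ Γ ∨ Fm.eq t2 t1 ∈ Γ)}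

/-- `B1(Γ ⊢ Δ)` : second arguments of `Add1` atoms in the consequent. -/
def B1 (S : Seq) : Set Tm := {b | ∃ a c, Fm.add1 a b c ∈ S.suc}

/-- `C(Γ ⊢ Δ)` : third arguments of `Add2` atoms in the antecedent
    or `Add1` atoms in the consequent. -/
def Cset (S : Seq) : Set Tm :=
  {c | (∃ a b, Fm.add2 a b c ∈ S.ant) ∨ (∃ a b, Fm.add1 a b c ∈ S.suc)}

/-- Index sequent. -/
def IndexSequent (S : Seq) : Prop :=
  (∀ t ∈ B1 S, ∀ u ∈ Cset S, ¬ DepTm (antSet S) t u) ∧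
  (∀ b ∈ B1 S, ∀ b' ∈ B1 S, ∀ n m : ℕ, EqvTm (antSet S) (sIter n b) (sIter m b') → n = m)

/-! ## The cyclic proof systems `CLKID^ω` and `CLKID^ω_a` -/

/-- Rule labels; each label carries the instance data needed to describe the
    rule application (principal formulas, substitutions, case variables, ...).
    `bud` labels bud leaves of cyclic derivation trees. -/
inductive Rule : Type where
  | ax
  | weak
  | cut (φ : Fm)
  | subst (θ : ℕ → Tm)
  | negL (φ : Fm)
  | negR (φ : Fm)
  | andL (φ ψ : Fm)
  | andR (φ ψ : Fm)
  | orL (φ ψ : Fm)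
  | orR (φ ψ : Fm)
  | impL (φ ψ : Fm)
  | impR (φ ψ : Fm)
  | allL (x : ℕ) (t : Tm) (φ : Fm)
  | allR (x : ℕ) (φ : Fm)
  | exL (x : ℕ) (φ : Fm)
  | exR (x : ℕ) (t : Tm) (φ : Fm)
  | eqR (t : Tm)
  | eqL (v1 v2 : ℕ) (t u : Tm)
  | eqLa (v1 v2 : ℕ) (t u : Tm)
  | add1R1
  | add1R2 (a b c : Tm)
  | add2R1
  | add2R2 (a b c : Tm)
  | caseAdd1 (a b c : Tm) (x y z : ℕ)
  | caseAdd2 (a b c : Tm) (x y z : ℕ)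
  | bud

/-- `Inf r S L` : the sequent `S` follows from the list of premises `L`
    by the rule (instance) `r`. -/
inductive Inf : Rule → Seq → List Seq → Prop where
  | ax {Γ Δ : Finset Fm} :
      (Γ ∩ Δ).Nonempty → Inf .ax ⟨Γ, Δ⟩ []
  | weak {Γ Δ Γ' Δ' : Finset Fm} :
      Γ' ⊆ Γ → Δ' ⊆ Δ → Inf .weak ⟨Γ, Δ⟩ [⟨Γ', Δ'⟩]
  | cut {Γ Δ : Finset Fm} {φ : Fm} :
      Inf (.cut φ) ⟨Γ, Δ⟩ [⟨Γ, insert φ Δ⟩, ⟨insert φ Γ, Δ⟩]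
  | subst {Γ Δ : Finset Fm} {θ : ℕ → Tm} :
      Inf (.subst θ) ⟨Γ.image (Fm.subst θ), Δ.image (Fm.subst θ)⟩ [⟨Γ, Δ⟩]
  | negL {Γ Δ : Finset Fm} {φ : Fm} :
      Inf (.negL φ) ⟨insert (.not φ) Γ, Δ⟩ [⟨Γ, insert φ Δ⟩]
  | negR {Γ Δ : Finset Fm} {φ : Fm} :
      Inf (.negR φ) ⟨Γ, insert (.not φ) Δ⟩ [⟨insert φ Γ, Δ⟩]
  | andL {Γ Δ : Finset Fm} {φ ψ : Fm} :
      Inf (.andL φ ψ) ⟨insert (.and φ ψ) Γ, Δ⟩ [⟨insert φ (insert ψ Γ), Δ⟩]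
  | andR {Γ Δ : Finset Fm} {φ ψ : Fm} :
      Inf (.andR φ ψ) ⟨Γ, insert (.and φ ψ) Δ⟩ [⟨Γ, insert φ Δ⟩, ⟨Γ, insert ψ Δ⟩]
  | orL {Γ Δ : Finset Fm} {φ ψ : Fm} :
      Inf (.orL φ ψ) ⟨insert (.or φ ψ) Γ, Δ⟩ [⟨insert φ Γ, Δ⟩, ⟨insert ψ Γ, Δ⟩]
  | orR {Γ Δ : Finset Fm} {φ ψ : Fm} :
      Inf (.orR φ ψ) ⟨Γ, insert (.or φ ψ) Δ⟩ [⟨Γ, insert φ (insert ψ Δ)⟩]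
  | impL {Γ Δ : Finset Fm} {φ ψ : Fm} :
      Inf (.impL φ ψ) ⟨insert (.imp φ ψ) Γ, Δ⟩ [⟨Γ, insert φ Δ⟩, ⟨insert ψ Γ, Δ⟩]
  | impR {Γ Δ : Finset Fm} {φ ψ : Fm} :
      Inf (.impR φ ψ) ⟨Γ, insert (.imp φ ψ) Δ⟩ [⟨insert φ Γ, insert ψ Δ⟩]
  | allL {Γ Δ : Finset Fm} {x : ℕ} {t : Tm} {φ : Fm} :
      Inf (.allL x t φ) ⟨insert (.all x φ) Γ, Δ⟩ [⟨insert (φ.subst (sub1 x t)) Γ, Δ⟩]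
  | allR {Γ Δ : Finset Fm} {x : ℕ} {φ : Fm} :
      (∀ ψ ∈ Γ ∪ Δ, x ∉ Fm.fv ψ) →
      Inf (.allR x φ) ⟨Γ, insert (.all x φ) Δ⟩ [⟨Γ, insert φ Δ⟩]
  | exL {Γ Δ : Finset Fm} {x : ℕ} {φ : Fm} :
      (∀ ψ ∈ Γ ∪ Δ, x ∉ Fm.fv ψ) →
      Inf (.exL x φ) ⟨insert (.ex x φ) Γ, Δ⟩ [⟨insert φ Γ, Δ⟩]
  | exR {Γ Δ : Finset Fm} {x : ℕ} {t : Tm} {φ : Fm} :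
      Inf (.exR x t φ) ⟨Γ, insert (.ex x φ) Δ⟩ [⟨Γ, insert (φ.subst (sub1 x t)) Δ⟩]
  | eqR {Γ Δ : Finset Fm} {t : Tm} :
      Inf (.eqR t) ⟨Γ, insert (.eq t t) Δ⟩ []
  | eqL {Γ Δ : Finset Fm} {v1 v2 : ℕ} {t u : Tm} :
      Inf (.eqL v1 v2 t u)
        ⟨insert (.eq t u) (Γ.image (Fm.subst (sub2 v1 v2 t u))),
          Δ.image (Fm.subst (sub2 v1 v2 t u))⟩
        [⟨Γ.image (Fm.subst (sub2 v1 v2 u t)), Δ.image (Fm.subst (sub2 v1 v2 u t))⟩]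
  | eqLa {Γ Δ : Finset Fm} {v1 v2 : ℕ} {t u : Tm} :
      Inf (.eqLa v1 v2 t u)
        ⟨insert (.eq t u) (Γ.image (Fm.subst (sub2 v1 v2 t u))),
          Δ.image (Fm.subst (sub2 v1 v2 t u))⟩
        [⟨insert (.eq t u) (Γ.image (Fm.subst (sub2 v1 v2 u t))),
          Δ.image (Fm.subst (sub2 v1 v2 u t))⟩]
  | add1R1 {Γ Δ : Finset Fm} {b : Tm} :
      Inf .add1R1 ⟨Γ, insert (.add1 .zero b b) Δ⟩ []
  | add1R2 {Γ Δ : Finset Fm} {a b c : Tm} :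
      Inf (.add1R2 a b c) ⟨Γ, insert (.add1 (.s a) b (.s c)) Δ⟩ [⟨Γ, insert (.add1 a b c) Δ⟩]
  | add2R1 {Γ Δ : Finset Fm} {b : Tm} :
      Inf .add2R1 ⟨Γ, insert (.add2 .zero b b) Δ⟩ []
  | add2R2 {Γ Δ : Finset Fm} {a b c : Tm} :
      Inf (.add2R2 a b c) ⟨Γ, insert (.add2 (.s a) b c) Δ⟩ [⟨Γ, insert (.add2 a (.s b) c) Δ⟩]
  | caseAdd1 {Γ Δ : Finset Fm} {a b c : Tm} {x y z : ℕ} :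
      x ≠ y → x ≠ z → y ≠ z →
      (∀ ψ ∈ insert (Fm.add1 a b c) (Γ ∪ Δ), x ∉ Fm.fv ψ ∧ y ∉ Fm.fv ψ ∧ z ∉ Fm.fv ψ) →
      Inf (.caseAdd1 a b c x y z) ⟨insert (.add1 a b c) Γ, Δ⟩
        [⟨insert (.eq a .zero) (insert (.eq b (.var y)) (insert (.eq c (.var y)) Γ)), Δ⟩,
         ⟨insert (.eq a (.s (.var x))) (insert (.eq b (.var y)) (insert (.eq c (.s (.var z)))
            (insert (.add1 (.var x) (.var y) (.var z)) Γ))), Δ⟩]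
  | caseAdd2 {Γ Δ : Finset Fm} {a b c : Tm} {x y z : ℕ} :
      x ≠ y → x ≠ z → y ≠ z →
      (∀ ψ ∈ insert (Fm.add2 a b c) (Γ ∪ Δ), x ∉ Fm.fv ψ ∧ y ∉ Fm.fv ψ ∧ z ∉ Fm.fv ψ) →
      Inf (.caseAdd2 a b c x y z) ⟨insert (.add2 a b c) Γ, Δ⟩
        [⟨insert (.eq a .zero) (insert (.eq b (.var y)) (insert (.eq c (.var y)) Γ)), Δ⟩,
         ⟨insert (.eq a (.s (.var x))) (insert (.eq b (.var y)) (insert (.eq c (.var z))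
            (insert (.add2 (.var x) (.s (.var y)) (.var z)) Γ))), Δ⟩]

/-- A labeling of tree nodes (finite sequences of naturals) by sequents and rules;
    `none` means the node is not in the tree. -/
abbrev Lbl : Type := List ℕ → Option (Seq × Rule)

/-- The children of `σ` are labeled exactly by the premise list `prems`. -/
def childrenOK (f : Lbl) (σ : List ℕ) (prems : List Seq) : Prop :=
  (∀ i : Fin prems.length, ∃ r', f (σ ++ [(i : ℕ)]) = some (prems.get i, r')) ∧
  (∀ i : ℕ, prems.length ≤ i → f (σ ++ [i]) = none)

/-- Derivation trees (possibly infinite): prefix-closed domain, each non-bud node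
    is the conclusion of a rule whose premises label its children, buds are leaves. -/
structure DTree where
  label : Lbl
  root_def : label [] ≠ none
  prefix_closed : ∀ σ τ : List ℕ, label (σ ++ τ) ≠ none → label σ ≠ none
  wf : ∀ σ S r, label σ = some (S, r) →
    (r = Rule.bud ∧ ∀ i : ℕ, label (σ ++ [i]) = none) ∨
    (r ≠ Rule.bud ∧ ∃ prems, Inf r S prems ∧ childrenOK label σ prems)

/-- `σ` is a bud of the labeling `f`. -/
def budAt (f : Lbl) (σ : List ℕ) : Prop := ∃ S, f σ = some (S, Rule.bud)

/-- `σ` is an inner node of `f` labeled with the sequent `S`. -/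
def innerWith (f : Lbl) (σ : List ℕ) (S : Seq) : Prop :=
  ∃ r, f σ = some (S, r) ∧ r ≠ Rule.bud

/-- A pre-proof: a finite derivation tree together with a function assigning to
    each bud a companion, i.e. an inner node labeled with the same sequent. -/
structure PreProof where
  D : DTree
  fin : {σ : List ℕ | D.label σ ≠ none}.Finite
  C : List ℕ → List ℕ
  comp : ∀ σ S, D.label σ = some (S, Rule.bud) → innerWith D.label (C σ) S

/-- Cycle-normality: every companion is an ancestor of its bud. -/
def PreProof.CycleNormal (P : PreProof) : Prop :=
  ∀ σ S, P.D.label σ = some (S, Rule.bud) → P.C σ <+: σ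

/-- `T` is the tree-unfolding of the pre-proof `P`: it agrees with `P.D` on
    non-bud nodes, below a bud it continues as below the bud's companion, and it
    is empty on nodes not in `P.D` having no bud prefix. -/
def IsUnfolding (P : PreProof) (T : Lbl) : Prop :=
  (∀ σ, P.D.label σ ≠ none → ¬ budAt P.D.label σ → T σ = P.D.label σ) ∧
  (∀ σ₁ σ₂ : List ℕ, budAt P.D.label σ₁ → T (σ₁ ++ σ₂) = T (P.C σ₁ ++ σ₂)) ∧
  (∀ σ, P.D.label σ = none → (∀ σ₁, σ₁ <+: σ → ¬ budAt P.D.label σ₁) → T σ = none)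

/-- An infinite path in the labeling `f`. -/
def IsInfPath (f : Lbl) (p : ℕ → List ℕ) : Prop :=
  (∀ i, f (p i) ≠ none) ∧ (∀ i, ∃ n : ℕ, p (i + 1) = p i ++ [n])

/-- Atomic formulas with an inductive predicate. -/
def isIndAtom (φ : Fm) : Prop :=
  (∃ a b c, φ = Fm.add1 a b c) ∨ (∃ a b c, φ = Fm.add2 a b c)

/-- A progressing trace step: the traced formula is the principal formula of a
    case rule and its successor (in the corresponding case distinction, child `j`)
    is a case-descendant. -/
def progStep : Rule → ℕ → Fm → Fm → Prop := fun r j τ τ' =>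
  match r with
  | .caseAdd1 a b c x y z =>
      τ = Fm.add1 a b c ∧ j = 1 ∧ τ' = Fm.add1 (.var x) (.var y) (.var z)
  | .caseAdd2 a b c x y z =>
      τ = Fm.add2 a b c ∧ j = 1 ∧ τ' = Fm.add2 (.var x) (.s (.var y)) (.var z)
  | _ => False

/-- The trace connection relation between the traced formula at a conclusion of a
    rule `r` and the traced formula at its `j`-th premise. -/
def connStep : Rule → ℕ → Fm → Fm → Prop := fun r j τ τ' =>
  match r with
  | .subst θ => τ = Fm.subst θ τ'
  | .eqL v1 v2 t u =>
      ∃ F : Fm, τ = Fm.subst (sub2 v1 v2 t u) F ∧ τ' = Fm.subst (sub2 v1 v2 u t) F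
  | .eqLa v1 v2 t u =>
      ∃ F : Fm, τ = Fm.subst (sub2 v1 v2 t u) F ∧ τ' = Fm.subst (sub2 v1 v2 u t) F
  | .caseAdd1 a b c x y z => τ' = τ ∨ progStep (.caseAdd1 a b c x y z) j τ τ'
  | .caseAdd2 a b c x y z => τ' = τ ∨ progStep (.caseAdd2 a b c x y z) j τ τ'
  | _ => τ' = τ

/-- `τ` is a trace following the tail from `k` of the path `p` in `f`. -/
def IsTraceFrom (f : Lbl) (p : ℕ → List ℕ) (k : ℕ) (τ : ℕ → Fm) : Prop :=
  ∀ i, k ≤ i →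
    ∃ (S : Seq) (r : Rule) (j : ℕ), f (p i) = some (S, r) ∧ τ i ∈ S.ant ∧ isIndAtom (τ i) ∧
      p (i + 1) = p i ++ [j] ∧ connStep r j (τ i) (τ (i + 1))

/-- The trace `τ` progresses at position `i` of the path `p`. -/
def progAt (f : Lbl) (p : ℕ → List ℕ) (τ : ℕ → Fm) (i : ℕ) : Prop :=
  ∃ (S : Seq) (r : Rule) (j : ℕ), f (p i) = some (S, r) ∧ p (i + 1) = p i ++ [j] ∧
    progStep r j (τ i) (τ (i + 1))

/-- The global trace condition for a (possibly infinite) labeling `f`. -/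
def GTC (f : Lbl) : Prop :=
  ∀ p : ℕ → List ℕ, IsInfPath f p →
    ∃ (k : ℕ) (τ : ℕ → Fm), IsTraceFrom f p k τ ∧
      ∀ n : ℕ, ∃ i, n ≤ i ∧ k ≤ i ∧ progAt f p τ i

/-- A pre-proof is a proof when its tree-unfolding satisfies the
    global trace condition. -/
def PreProof.IsProof (P : PreProof) : Prop := ∃ T : Lbl, IsUnfolding P T ∧ GTC T

/-- Some rule satisfying `Q` occurs in the labeling `f`. -/
def usesRule (f : Lbl) (Q : Rule → Prop) : Prop := ∃ σ S r, f σ = some (S, r) ∧ Q r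

/-- No occurrence of (Cut). -/
def PreProof.CutFree (P : PreProof) : Prop :=
  ¬ usesRule P.D.label (fun r => ∃ φ, r = Rule.cut φ)

/-- No occurrence of (= L_a): the pre-proof is a `CLKID^ω` pre-proof. -/
def PreProof.NoEqLa (P : PreProof) : Prop :=
  ¬ usesRule P.D.label (fun r => ∃ v1 v2 t u, r = Rule.eqLa v1 v2 t u)

/-- No occurrence of (= L): the pre-proof is a `CLKID^ω_a` pre-proof. -/
def PreProof.NoEqL (P : PreProof) : Prop :=
  ¬ usesRule P.D.label (fun r => ∃ v1 v2 t u, r = Rule.eqL v1 v2 t u)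

/-- The conclusion of the pre-proof is the sequent `S`. -/
def PreProof.Concl (P : PreProof) (S : Seq) : Prop := ∃ r, P.D.label [] = some (S, r)

/-- Provability in `CLKID^ω`. -/
def ProvableW (S : Seq) : Prop :=
  ∃ P : PreProof, P.IsProof ∧ P.NoEqLa ∧ P.Concl S

/-- Provability in `CLKID^ω_a`. -/
def ProvableWa (S : Seq) : Prop :=
  ∃ P : PreProof, P.IsProof ∧ P.NoEqL ∧ P.Concl S

/-- Cut-free provability in `CLKID^ω`. -/
def CutFreeProvableW (S : Seq) : Prop :=
  ∃ P : PreProof, P.IsProof ∧ P.CutFree ∧ P.NoEqLa ∧ P.Concl S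

/-- The sequent `Add2(x, y, z) ⊢ Add1(x, y, z)`. -/
def goalSeq : Seq :=
  ⟨{Fm.add2 (Tm.var 0) (Tm.var 1) (Tm.var 2)}, {Fm.add1 (Tm.var 0) (Tm.var 1) (Tm.var 2)}⟩

/-- A cut-free cycle-normal `CLKID^ω_a` proof of `Add2(x,y,z) ⊢ Add1(x,y,z)`. -/
def IsCNProofOfGoal (P : PreProof) : Prop :=
  P.IsProof ∧ P.CutFree ∧ P.NoEqL ∧ P.CycleNormal ∧ P.Concl goalSeq

/-- The index of an `Add2` atom with second argument `b` in the sequent `S` is `⊥`. -/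
def IndexBot (S : Seq) (b : Tm) : Prop :=
  ∀ a' b' c', Fm.add1 a' b' c' ∈ S.suc → ¬ DepTm (antSet S) b b'

/-- `σ` is a switching point of `f`: the conclusion of a `(Case Add2)` rule whose
    principal formula has index `⊥`. -/
def SwitchingPoint (f : Lbl) (σ : List ℕ) : Prop :=
  ∃ S a b c x y z, f σ = some (S, Rule.caseAdd2 a b c x y z) ∧ IndexBot S b

/-- `σ` is the conclusion of a `(Case Add2)` rule in `f`. -/
def CaseAdd2At (f : Lbl) (σ : List ℕ) : Prop :=
  ∃ S a b c x y z, f σ = some (S, Rule.caseAdd2 a b c x y z)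

/-- The node `σ` of `f` is labeled with an index sequent. -/
def IndexSequentAt (f : Lbl) (σ : List ℕ) : Prop :=
  ∃ S r, f σ = some (S, r) ∧ IndexSequent S

/-- A finite index path `p 0, …, p N` in `f`:  its first sequent is an index
    sequent, and a step to the left premise (child `0`) of a `(Case Add2)` rule
    only happens at switching points. -/
def IsIndexPathUpTo (f : Lbl) (p : ℕ → List ℕ) (N : ℕ) : Prop :=
  (∀ i, i ≤ N → f (p i) ≠ none) ∧
  (∀ i, i < N → ∃ n : ℕ, p (i + 1) = p i ++ [n]) ∧
  IndexSequentAt f (p 0) ∧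
  (∀ i, i < N → CaseAdd2At f (p i) → p (i + 1) = p i ++ [0] → SwitchingPoint f (p i))

/-- An infinite index path in `f`. -/
def IsInfIndexPath (f : Lbl) (p : ℕ → List ℕ) : Prop :=
  IsInfPath f p ∧
  IndexSequentAt f (p 0) ∧
  (∀ i, CaseAdd2At f (p i) → p (i + 1) = p i ++ [0] → SwitchingPoint f (p i))

/-- The child index chosen by the rightmost path: the right assumption of
    `(Case Add2)`, the unique premise otherwise. -/
def rightIdx : Rule → ℕ := fun r =>
  match r with
  | .caseAdd2 _ _ _ _ _ _ => 1
  | _ => 0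

/-- One step of the rightmost path in `f`. -/
def RightStep (f : Lbl) (σ σ' : List ℕ) : Prop :=
  ∃ S r, f σ = some (S, r) ∧ σ' = σ ++ [rightIdx r] ∧ f σ' ≠ none

/-- `A(Γ ⊢ Δ)` of Lemma `abc_relations`. -/
def Aset (S : Seq) : Set Tm :=
  {a | (∃ b c, Fm.add2 a b c ∈ S.ant) ∨ (∃ b c, Fm.add1 a b c ∈ S.suc) ∨ a = Tm.zero}

/-- `BC(Γ ⊢ Δ)` of Lemma `abc_relations`. -/
def BCset (S : Seq) : Set Tm :=
  {t | (∃ a c, Fm.add2 a t c ∈ S.ant) ∨ (∃ a b, Fm.add2 a b t ∈ S.ant) ∨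
       (∃ a c, Fm.add1 a t c ∈ S.suc) ∨ (∃ a b, Fm.add1 a b t ∈ S.suc)}

/-- The rules that can occur in a cut-free cycle-normal `CLKID^ω_a` proof of
    `Add2(x,y,z) ⊢ Add1(x,y,z)` (plus bud labels). -/
def allowedRule (r : Rule) : Prop :=
  r = Rule.bud ∨ r = Rule.weak ∨ (∃ θ, r = Rule.subst θ) ∨
  (∃ v1 v2 t u, r = Rule.eqLa v1 v2 t u) ∨
  (∃ a b c x y z, r = Rule.caseAdd2 a b c x y z) ∨
  r = Rule.add1R1 ∨ (∃ a b c, r = Rule.add1R2 a b c)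

/-! ### Auxiliary substitution lemmas -/

theorem Tm.fv_finite (t : Tm) : t.fv.Finite := by
  induction t with
  | var x => exact Set.finite_singleton x
  | zero => exact Set.finite_empty
  | s t ih => exact ih

theorem Fm.fv_finite (φ : Fm) : φ.fv.Finite := by
  induction φ with
  | eq t u => exact (t.fv_finite).union (u.fv_finite)
  | add1 a b c => exact ((a.fv_finite).union (b.fv_finite)).union (c.fv_finite)
  | add2 a b c => exact ((a.fv_finite).union (b.fv_finite)).union (c.fv_finite)
  | not φ ih => exact ih
  | and φ ψ ih1 ih2 => exact ih1.union ih2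
  | or φ ψ ih1 ih2 => exact ih1.union ih2
  | imp φ ψ ih1 ih2 => exact ih1.union ih2
  | all x φ ih => exact ih.diff
  | ex x φ ih => exact ih.diff

theorem Tm.subst_congr {θ θ' : ℕ → Tm} {t : Tm} (h : ∀ x ∈ t.fv, θ x = θ' x) :
    t.subst θ = t.subst θ' := by
  induction t with
  | var x => exact h x (by simp [Tm.fv])
  | zero => rfl
  | s t ih => simp only [Tm.subst]; rw [ih (fun x hx => h x hx)]

theorem Fm.subst_congr {θ θ' : ℕ → Tm} {φ : Fm} (h : ∀ x ∈ φ.fv, θ x = θ' x) :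
    φ.subst θ = φ.subst θ' := by
  induction φ generalizing θ θ' with
  | eq t u =>
      simp only [Fm.subst]
      rw [Tm.subst_congr (fun x hx => h x (Or.inl hx)),
        Tm.subst_congr (fun x hx => h x (Or.inr hx))]
  | add1 a b c =>
      simp only [Fm.subst]
      rw [Tm.subst_congr (fun x hx => h x (Or.inl (Or.inl hx))),
        Tm.subst_congr (fun x hx => h x (Or.inl (Or.inr hx))),
        Tm.subst_congr (fun x hx => h x (Or.inr hx))]
  | add2 a b c =>
      simp only [Fm.subst]
      rw [Tm.subst_congr (fun x hx => h x (Or.inl (Or.inl hx))),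
        Tm.subst_congr (fun x hx => h x (Or.inl (Or.inr hx))),
        Tm.subst_congr (fun x hx => h x (Or.inr hx))]
  | not φ ih => simp only [Fm.subst]; rw [ih h]
  | and φ ψ ih1 ih2 =>
      simp only [Fm.subst]
      rw [ih1 (fun x hx => h x (Or.inl hx)), ih2 (fun x hx => h x (Or.inr hx))]
  | or φ ψ ih1 ih2 =>
      simp only [Fm.subst]
      rw [ih1 (fun x hx => h x (Or.inl hx)), ih2 (fun x hx => h x (Or.inr hx))]
  | imp φ ψ ih1 ih2 =>
      simp only [Fm.subst]
      rw [ih1 (fun x hx => h x (Or.inl hx)), ih2 (fun x hx => h x (Or.inr hx))]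
  | all x φ ih =>
      simp only [Fm.subst]
      rw [ih (fun y hy => ?_)]
      by_cases hxy : y = x
      · subst hxy; simp
      · rw [Function.update_of_ne hxy, Function.update_of_ne hxy]
        exact h y ⟨hy, hxy⟩
  | ex x φ ih =>
      simp only [Fm.subst]
      rw [ih (fun y hy => ?_)]
      by_cases hxy : y = x
      · subst hxy; simp
      · rw [Function.update_of_ne hxy, Function.update_of_ne hxy]
        exact h y ⟨hy, hxy⟩

theorem Tm.subst_var (t : Tm) : t.subst Tm.var = t := by
  induction t with
  | var x => rfl
  | zero => rfl
  | s t ih => simp only [Tm.subst]; rw [ih]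

theorem Fm.subst_var (φ : Fm) : φ.subst Tm.var = φ := by
  induction φ with
  | eq t u => simp only [Fm.subst]; rw [Tm.subst_var, Tm.subst_var]
  | add1 a b c => simp only [Fm.subst]; rw [Tm.subst_var, Tm.subst_var, Tm.subst_var]
  | add2 a b c => simp only [Fm.subst]; rw [Tm.subst_var, Tm.subst_var, Tm.subst_var]
  | not φ ih => simp only [Fm.subst]; rw [ih]
  | and φ ψ ih1 ih2 => simp only [Fm.subst]; rw [ih1, ih2]
  | or φ ψ ih1 ih2 => simp only [Fm.subst]; rw [ih1, ih2]
  | imp φ ψ ih1 ih2 => simp only [Fm.subst]; rw [ih1, ih2]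
  | all x φ ih => simp only [Fm.subst]; rw [Function.update_eq_self, ih]
  | ex x φ ih => simp only [Fm.subst]; rw [Function.update_eq_self, ih]

theorem Fm.subst_id {θ : ℕ → Tm} {φ : Fm} (h : ∀ x ∈ φ.fv, θ x = Tm.var x) :
    φ.subst θ = φ := by
  rw [Fm.subst_congr (θ' := Tm.var) h, Fm.subst_var]

theorem Tm.mem_fv_subst {θ : ℕ → Tm} {t : Tm} {x y : ℕ} (hy : y ∈ t.fv)
    (hx : x ∈ (θ y).fv) : x ∈ (t.subst θ).fv := by
  induction t with
  | var z => simp only [Tm.fv, Set.mem_singleton_iff] at hy; subst hy; exact hx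
  | zero => simp [Tm.fv] at hy
  | s t ih => exact ih hy
/-! ### Address coding for the edge-subdivision surgery -/

namespace Elim

/-- Decode a "new" address into an old address plus an optional mid-edge index. -/
def dec : List ℕ → Option (List ℕ × Option ℕ)
  | [] => some ([], none)
  | [j] => some ([], some j)
  | j :: z :: rest => if z = 0 then (dec rest).map (fun p => (j :: p.1, p.2)) else none

/-- The new address of an old node. -/
def enc (σ : List ℕ) : List ℕ := σ.flatMap (fun i => [i, 0])

@[simp] theorem enc_nil : enc [] = [] := rfl

theorem enc_cons (i : ℕ) (σ : List ℕ) : enc (i :: σ) = i :: 0 :: enc σ := rfl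

theorem enc_append (σ τ : List ℕ) : enc (σ ++ τ) = enc σ ++ enc τ := by
  simp [enc]

theorem enc_snoc (σ : List ℕ) (i : ℕ) : enc (σ ++ [i]) = enc σ ++ [i, 0] := by
  rw [enc_append]; rfl

theorem dec_enc_append (σ : List ℕ) (l : List ℕ) :
    dec (enc σ ++ l) = (dec l).map (fun p => (σ ++ p.1, p.2)) := by
  induction σ with
  | nil => cases hd : dec l with
    | none => simp [enc, hd]
    | some p => simp [enc, hd]
  | cons i σ ih =>
      rw [enc_cons]
      show dec (i :: 0 :: (enc σ ++ l)) = _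
      simp only [dec, if_pos rfl, ih]
      cases dec l with
      | none => rfl
      | some p => rfl

theorem dec_enc (σ : List ℕ) : dec (enc σ) = some (σ, none) := by
  have := dec_enc_append σ []
  simpa [dec] using this

theorem dec_enc_mid (σ : List ℕ) (j : ℕ) : dec (enc σ ++ [j]) = some (σ, some j) := by
  have := dec_enc_append σ [j]
  simpa [dec] using this

/-- Inverse of encoding. -/
theorem dec_inv (τ : List ℕ) (σ : List ℕ) (o : Option ℕ) (h : dec τ = some (σ, o)) :
    (o = none ∧ τ = enc σ) ∨ (∃ j, o = some j ∧ τ = enc σ ++ [j]) := by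
  induction τ using dec.induct generalizing σ o with
  | case1 =>
      simp [dec] at h; left; simp [h.1, h.2, enc]
  | case2 j =>
      simp [dec] at h; right; exact ⟨j, by simp [h.1, h.2, enc]⟩
  | case3 j rest ih =>
      rw [dec, if_pos rfl] at h
      cases hd : dec rest with
      | none => rw [hd] at h; simp at h
      | some p =>
          rw [hd] at h
          simp only [Option.map_some] at h
          have h1 : j :: p.1 = σ := congrArg Prod.fst (Option.some.inj h)
          have h2 : p.2 = o := congrArg Prod.snd (Option.some.inj h)
          rcases ih p.1 p.2 (by rw [hd]) with ⟨ho, hτ⟩ | ⟨j', ho, hτ⟩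
          · left
            refine ⟨by rw [← h2, ho], ?_⟩
            rw [← h1, enc_cons, hτ]
          · right
            refine ⟨j', by rw [← h2, ho], ?_⟩
            rw [← h1, enc_cons, hτ]; rfl
  | case4 j z rest hz =>
      rw [dec, if_neg hz] at h; simp at h

/-- Behaviour of `dec` under appending one index. -/
theorem dec_snoc : ∀ (τ : List ℕ) (n : ℕ),
    dec (τ ++ [n]) = match dec τ with
      | some (σ, none) => some (σ, some n)
      | some (σ, some j) => if n = 0 then some (σ ++ [j], none) else none
      | none => none
  | [], n => by simp [dec]
  | [j], n => by
      show dec [j, n] = _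
      simp only [dec]
      by_cases hn : n = 0 <;> simp [hn]
  | j :: z :: rest, n => by
      show dec (j :: z :: (rest ++ [n])) = _
      simp only [dec]
      by_cases hz : z = 0
      · subst hz
        rw [if_pos rfl, if_pos rfl, dec_snoc rest n]
        cases hd : dec rest with
        | none => rfl
        | some p =>
            obtain ⟨σ, o⟩ := p
            cases o with
            | none => rfl
            | some j' =>
                by_cases hn : n = 0 <;> simp [hn]
      · rw [if_neg hz, if_neg hz]

end Elim
namespace Elim

section Surgery

variable (bad : Rule → Prop) (g1 : Seq → Rule → Seq → Rule) (gM : Seq → Rule → Seq → Seq)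
  (g2 : Seq → Rule → Seq → Rule)

open Classical in
/-- Label of a (translated) old node in the surgered tree. -/
noncomputable def nodeL (f : Lbl) (σ : List ℕ) : Option (Seq × Rule) :=
  match f σ with
  | none => none
  | some (S, r) =>
    if bad r then
      match f (σ ++ [0]) with
      | none => none
      | some (P, _) => if Inf r S [P] then some (S, g1 S r P) else none
    else some (S, r)

open Classical in
/-- Label of the interposed node on the edge from old node `σ` to its `j`-th child. -/
noncomputable def midL (f : Lbl) (σ : List ℕ) (j : ℕ) : Option (Seq × Rule) :=
  match f σ, f (σ ++ [j]) with
  | some (S, r), some (P, _) =>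
      if bad r then
        (if j = 0 ∧ Inf r S [P] then some (gM S r P, g2 S r P) else none)
      else some (P, Rule.weak)
  | _, _ => none

/-- The surgered labeling. -/
noncomputable def Sg (f : Lbl) : Lbl := fun τ =>
  match dec τ with
  | some (σ, none) => nodeL bad g1 f σ
  | some (σ, some j) => midL bad gM g2 f σ j
  | none => none

variable {bad g1 gM g2}

theorem Sg_eq_node {f : Lbl} {τ σ : List ℕ} (h : dec τ = some (σ, none)) :
    Sg bad g1 gM g2 f τ = nodeL bad g1 f σ := by
  simp [Sg, h]

theorem Sg_eq_mid {f : Lbl} {τ σ : List ℕ} {j : ℕ} (h : dec τ = some (σ, some j)) :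
    Sg bad g1 gM g2 f τ = midL bad gM g2 f σ j := by
  simp [Sg, h]

theorem Sg_eq_none {f : Lbl} {τ : List ℕ} (h : dec τ = none) :
    Sg bad g1 gM g2 f τ = none := by
  simp [Sg, h]

/- nodeL computation lemmas -/

theorem nodeL_none_of {f : Lbl} {σ : List ℕ} (h : f σ = none) : nodeL bad g1 f σ = none := by
  simp [nodeL, h]

theorem nodeL_good {f : Lbl} {σ : List ℕ} {S : Seq} {r : Rule} (h : f σ = some (S, r))
    (hb : ¬ bad r) : nodeL bad g1 f σ = some (S, r) := by
  simp [nodeL, h, hb]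

theorem nodeL_bad {f : Lbl} {σ : List ℕ} {S P : Seq} {r rc : Rule} (h : f σ = some (S, r))
    (hb : bad r) (hc : f (σ ++ [0]) = some (P, rc)) (hI : Inf r S [P]) :
    nodeL bad g1 f σ = some (S, g1 S r P) := by
  simp [nodeL, h, hb, hc, hI]

theorem nodeL_bad_none {f : Lbl} {σ : List ℕ} {S : Seq} {r : Rule} (h : f σ = some (S, r))
    (hb : bad r) (hc : f (σ ++ [0]) = none) : nodeL bad g1 f σ = none := by
  simp [nodeL, h, hb, hc]

theorem nodeL_bad_notInf {f : Lbl} {σ : List ℕ} {S P : Seq} {r rc : Rule}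
    (h : f σ = some (S, r)) (hb : bad r) (hc : f (σ ++ [0]) = some (P, rc))
    (hI : ¬ Inf r S [P]) : nodeL bad g1 f σ = none := by
  simp [nodeL, h, hb, hc, hI]

theorem nodeL_some {f : Lbl} {σ : List ℕ} {S' : Seq} {r' : Rule}
    (h : nodeL bad g1 f σ = some (S', r')) :
    ∃ r, f σ = some (S', r) ∧
      ((¬ bad r ∧ r' = r) ∨
        (bad r ∧ ∃ P rc, f (σ ++ [0]) = some (P, rc) ∧ Inf r S' [P] ∧ r' = g1 S' r P)) := by
  classical
  cases hf : f σ with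
  | none => rw [nodeL_none_of hf] at h; exact absurd h (by simp)
  | some pr =>
    obtain ⟨S, r⟩ := pr
    by_cases hb : bad r
    · cases hc : f (σ ++ [0]) with
      | none => rw [nodeL_bad_none hf hb hc] at h; exact absurd h (by simp)
      | some pc =>
        obtain ⟨P, rc⟩ := pc
        by_cases hI : Inf r S [P]
        · rw [nodeL_bad hf hb hc hI] at h
          obtain ⟨hS, hr⟩ := Prod.mk.injEq .. ▸ Option.some.inj h
          subst hS
          exact ⟨r, rfl, Or.inr ⟨hb, P, rc, rfl, hI, hr.symm⟩⟩
        · rw [nodeL_bad_notInf hf hb hc hI] at h; exact absurd h (by simp)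
    · rw [nodeL_good hf hb] at h
      obtain ⟨hS, hr⟩ := Prod.mk.injEq .. ▸ Option.some.inj h
      subst hS
      exact ⟨r, rfl, Or.inl ⟨hb, hr.symm⟩⟩

theorem nodeL_ne_none {f : Lbl} {σ : List ℕ} (h : nodeL bad g1 f σ ≠ none) :
    f σ ≠ none := by
  intro hf; exact h (nodeL_none_of hf)

/- midL computation lemmas -/

theorem midL_none_of {f : Lbl} {σ : List ℕ} {j : ℕ} (h : f σ = none) :
    midL bad gM g2 f σ j = none := by
  simp [midL, h]

theorem midL_none_of_child {f : Lbl} {σ : List ℕ} {j : ℕ} (h : f (σ ++ [j]) = none) :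
    midL bad gM g2 f σ j = none := by
  cases hf : f σ with
  | none => simp [midL, hf]
  | some pr => obtain ⟨S, r⟩ := pr; simp [midL, hf, h]

theorem midL_good {f : Lbl} {σ : List ℕ} {j : ℕ} {S P : Seq} {r rc : Rule}
    (h : f σ = some (S, r)) (hb : ¬ bad r) (hc : f (σ ++ [j]) = some (P, rc)) :
    midL bad gM g2 f σ j = some (P, Rule.weak) := by
  simp [midL, h, hb, hc]

theorem midL_bad {f : Lbl} {σ : List ℕ} {S P : Seq} {r rc : Rule}
    (h : f σ = some (S, r)) (hb : bad r) (hc : f (σ ++ [0]) = some (P, rc))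
    (hI : Inf r S [P]) : midL bad gM g2 f σ 0 = some (gM S r P, g2 S r P) := by
  simp [midL, h, hb, hc, hI]

theorem midL_bad_no {f : Lbl} {σ : List ℕ} {j : ℕ} {S P : Seq} {r rc : Rule}
    (h : f σ = some (S, r)) (hb : bad r) (hc : f (σ ++ [j]) = some (P, rc))
    (hI : ¬ (j = 0 ∧ Inf r S [P])) : midL bad gM g2 f σ j = none := by
  simp only [midL, h, hc]
  rw [if_pos hb, if_neg hI]

theorem midL_some {f : Lbl} {σ : List ℕ} {j : ℕ} {S' : Seq} {r' : Rule}
    (h : midL bad gM g2 f σ j = some (S', r')) :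
    ∃ S r P rc, f σ = some (S, r) ∧ f (σ ++ [j]) = some (P, rc) ∧
      ((¬ bad r ∧ S' = P ∧ r' = Rule.weak) ∨
        (bad r ∧ j = 0 ∧ Inf r S [P] ∧ S' = gM S r P ∧ r' = g2 S r P)) := by
  classical
  cases hf : f σ with
  | none => rw [midL_none_of hf] at h; exact absurd h (by simp)
  | some pr =>
    obtain ⟨S, r⟩ := pr
    cases hc : f (σ ++ [j]) with
    | none => rw [midL_none_of_child hc] at h; exact absurd h (by simp)
    | some pc =>
      obtain ⟨P, rc⟩ := pc
      by_cases hb : bad r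
      · by_cases hI : j = 0 ∧ Inf r S [P]
        · obtain ⟨hj, hI⟩ := hI
          subst hj
          rw [midL_bad hf hb hc hI] at h
          obtain ⟨hS, hr⟩ := Prod.mk.injEq .. ▸ Option.some.inj h
          exact ⟨S, r, P, rc, rfl, rfl, Or.inr ⟨hb, rfl, hI, hS.symm, hr.symm⟩⟩
        · rw [midL_bad_no hf hb hc hI] at h; exact absurd h (by simp)
      · rw [midL_good hf hb hc] at h
        obtain ⟨hS, hr⟩ := Prod.mk.injEq .. ▸ Option.some.inj h
        exact ⟨S, r, P, rc, rfl, rfl, Or.inl ⟨hb, hS.symm, hr.symm⟩⟩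

theorem midL_ne_none {f : Lbl} {σ : List ℕ} {j : ℕ} (h : midL bad gM g2 f σ j ≠ none) :
    f σ ≠ none ∧ f (σ ++ [j]) ≠ none := by
  classical
  constructor
  · intro hf; exact h (midL_none_of hf)
  · intro hf; exact h (midL_none_of_child hf)

/-- `nodeL` only depends on the label at the node and the label at its `0`-th child,
and of the latter only on the sequent. -/
theorem nodeL_ext {f f' : Lbl} {σ σ' : List ℕ} (h0 : f σ = f' σ')
    (h1 : (f (σ ++ [0]) = none ∧ f' (σ' ++ [0]) = none) ∨
      ∃ P rc rc', f (σ ++ [0]) = some (P, rc) ∧ f' (σ' ++ [0]) = some (P, rc')) :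
    nodeL bad g1 f σ = nodeL bad g1 f' σ' := by
  classical
  cases hf : f σ with
  | none =>
      have hf' : f' σ' = none := by rw [← h0]; exact hf
      rw [nodeL_none_of hf, nodeL_none_of hf']
  | some pr =>
    obtain ⟨S, r⟩ := pr
    have hf' : f' σ' = some (S, r) := h0 ▸ hf
    by_cases hb : bad r
    · rcases h1 with ⟨hc, hc'⟩ | ⟨P, rc, rc', hc, hc'⟩
      · rw [nodeL_bad_none hf hb hc, nodeL_bad_none hf' hb hc']
      · by_cases hI : Inf r S [P]
        · rw [nodeL_bad hf hb hc hI, nodeL_bad hf' hb hc' hI]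
        · rw [nodeL_bad_notInf hf hb hc hI, nodeL_bad_notInf hf' hb hc' hI]
    · rw [nodeL_good hf hb, nodeL_good hf' hb]

theorem midL_ext {f f' : Lbl} {σ σ' : List ℕ} {j : ℕ} (h0 : f σ = f' σ')
    (h1 : (f (σ ++ [j]) = none ∧ f' (σ' ++ [j]) = none) ∨
      ∃ P rc rc', f (σ ++ [j]) = some (P, rc) ∧ f' (σ' ++ [j]) = some (P, rc')) :
    midL bad gM g2 f σ j = midL bad gM g2 f' σ' j := by
  classical
  cases hf : f σ with
  | none =>
      have hf' : f' σ' = none := by rw [← h0]; exact hf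
      rw [midL_none_of hf, midL_none_of hf']
  | some pr =>
    obtain ⟨S, r⟩ := pr
    have hf' : f' σ' = some (S, r) := by rw [← h0]; exact hf
    rcases h1 with ⟨hc, hc'⟩ | ⟨P, rc, rc', hc, hc'⟩
    · rw [midL_none_of_child hc, midL_none_of_child hc']
    · by_cases hb : bad r
      · by_cases hI : j = 0 ∧ Inf r S [P]
        · obtain ⟨hj, hI⟩ := hI
          subst hj
          rw [midL_bad hf hb hc hI, midL_bad hf' hb hc' hI]
        · rw [midL_bad_no hf hb hc hI, midL_bad_no hf' hb hc' hI]
      · rw [midL_good hf hb hc, midL_good hf' hb hc']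

end Surgery

end Elim
namespace Elim

section WithD

variable {bad : Rule → Prop} {g1 : Seq → Rule → Seq → Rule} {gM : Seq → Rule → Seq → Seq}
  {g2 : Seq → Rule → Seq → Rule}

/-- The full specification of the gadget replacing bad (unary) rules. -/
def GadgetSpec (bad : Rule → Prop) (g1 : Seq → Rule → Seq → Rule) (gM : Seq → Rule → Seq → Seq)
    (g2 : Seq → Rule → Seq → Rule) : Prop :=
  ∀ S r P, bad r → Inf r S [P] →
    Inf (g1 S r P) S [gM S r P] ∧ Inf (g2 S r P) (gM S r P) [P] ∧
    ¬ bad (g1 S r P) ∧ ¬ bad (g2 S r P) ∧ g1 S r P ≠ Rule.bud ∧ g2 S r P ≠ Rule.bud ∧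
    (∀ τ τ', τ ∈ S.ant → isIndAtom τ → τ' ∈ P.ant → isIndAtom τ' → connStep r 0 τ τ' →
      ∃ μ, μ ∈ (gM S r P).ant ∧ isIndAtom μ ∧
        connStep (g1 S r P) 0 τ μ ∧ connStep (g2 S r P) 0 μ τ')

variable (hbud : ¬ bad Rule.bud)
  (hsingle : ∀ r S prems, bad r → Inf r S prems → ∃ P, prems = [P])
  (hg : GadgetSpec bad g1 gM g2)
  (D : DTree)

theorem D_bud_child_none {σ : List ℕ} {S : Seq} (h : D.label σ = some (S, Rule.bud)) :
    ∀ i, D.label (σ ++ [i]) = none := by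
  rcases D.wf σ S Rule.bud h with ⟨_, h2⟩ | ⟨hne, _⟩
  · exact h2
  · exact absurd rfl hne

theorem D_nobud_strict {σ π : List ℕ} (h : D.label σ ≠ none) (hπ : π <+: σ) (hne : π ≠ σ) :
    ¬ budAt D.label π := by
  rintro ⟨S, hb⟩
  obtain ⟨rest, hrest⟩ := hπ
  cases rest with
  | nil => exact hne (by rw [← hrest, List.append_nil])
  | cons i rest' =>
      have h1 : D.label ((π ++ [i]) ++ rest') ≠ none := by
        rw [List.append_assoc, List.singleton_append, hrest]; exact h
      have h2 := D.prefix_closed _ _ h1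
      exact h2 (D_bud_child_none D hb i)

include hbud hsingle in
theorem nodeL_D {σ : List ℕ} {S : Seq} {r : Rule} (h : D.label σ = some (S, r)) :
    (¬ bad r ∧ nodeL bad g1 D.label σ = some (S, r)) ∨
      (bad r ∧ ∃ P rc, D.label (σ ++ [0]) = some (P, rc) ∧ Inf r S [P] ∧
        nodeL bad g1 D.label σ = some (S, g1 S r P)) := by
  by_cases hb : bad r
  · right
    refine ⟨hb, ?_⟩
    rcases D.wf σ S r h with ⟨hr, _⟩ | ⟨_, prems, hInf, hck⟩
    · exact absurd (hr ▸ hb) hbud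
    · obtain ⟨P, hP⟩ := hsingle r S prems hb hInf
      subst hP
      obtain ⟨rc, hc⟩ := hck.1 ⟨0, by simp⟩
      simp only [List.get] at hc
      refine ⟨P, rc, hc, hInf, nodeL_bad h hb hc hInf⟩
  · exact Or.inl ⟨hb, nodeL_good h hb⟩

include hbud hsingle in
theorem D_bad_children {σ : List ℕ} {S : Seq} {r : Rule} (h : D.label σ = some (S, r))
    (hb : bad r) : ∀ i, 1 ≤ i → D.label (σ ++ [i]) = none := by
  rcases D.wf σ S r h with ⟨hr, _⟩ | ⟨_, prems, hInf, hck⟩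
  · exact absurd (hr ▸ hb) hbud
  · obtain ⟨P, hP⟩ := hsingle r S prems hb hInf
    subst hP
    intro i hi
    exact hck.2 i (by simpa using hi)

include hbud hsingle in
theorem Sg_snoc_ne {ρ : List ℕ} {n : ℕ} (h : Sg bad g1 gM g2 D.label (ρ ++ [n]) ≠ none) :
    Sg bad g1 gM g2 D.label ρ ≠ none := by
  cases hd : dec ρ with
  | none =>
      exfalso
      apply h
      apply Sg_eq_none
      rw [dec_snoc, hd]
  | some pr =>
    obtain ⟨σ, o⟩ := pr
    cases o with
    | none =>
        rw [Sg_eq_node hd]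
        have hd' : dec (ρ ++ [n]) = some (σ, some n) := by rw [dec_snoc, hd]
        rw [Sg_eq_mid hd'] at h
        have hσ := (midL_ne_none h).1
        cases hl : D.label σ with
        | none => exact absurd hl hσ
        | some pr' =>
            obtain ⟨S, r⟩ := pr'
            rcases nodeL_D (g1 := g1) hbud hsingle D hl with ⟨_, h2⟩ | ⟨_, _, _, _, _, h2⟩ <;>
              simp [h2]
    | some j =>
        by_cases hn : n = 0
        · subst hn
          have hd' : dec (ρ ++ [0]) = some (σ ++ [j], none) := by
            rw [dec_snoc, hd]; simp
          rw [Sg_eq_node hd'] at h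
          have hc : D.label (σ ++ [j]) ≠ none := nodeL_ne_none h
          have hσ : D.label σ ≠ none := D.prefix_closed σ [j] hc
          rw [Sg_eq_mid hd]
          cases hl : D.label σ with
          | none => exact absurd hl hσ
          | some pr' =>
            obtain ⟨S, r⟩ := pr'
            cases hlc : D.label (σ ++ [j]) with
            | none => exact absurd hlc hc
            | some pc =>
              obtain ⟨P, rc⟩ := pc
              by_cases hb : bad r
              · have hj : j = 0 := by
                  by_contra hj
                  exact hc (D_bad_children hbud hsingle D hl hb j (by omega))
                subst hj
                rcases nodeL_D (g1 := g1) hbud hsingle D hl with ⟨hnb, _⟩ | ⟨_, P', rc', hc', hI, _⟩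
                · exact absurd hb hnb
                · have hPP : P' = P := by
                    rw [hc'] at hlc
                    exact congrArg Prod.fst (Option.some.inj hlc)
                  subst hPP
                  simp [midL_bad hl hb hlc hI]
              · simp [midL_good hl hb hlc]
        · exfalso
          apply h
          apply Sg_eq_none
          rw [dec_snoc, hd]
          simp [hn]

include hbud hsingle in
theorem Sg_prefix_closed : ∀ σ τ : List ℕ,
    Sg bad g1 gM g2 D.label (σ ++ τ) ≠ none → Sg bad g1 gM g2 D.label σ ≠ none := by
  intro σ τ
  induction τ using List.reverseRecOn generalizing σ with
  | nil => intro h; rwa [List.append_nil] at h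
  | append_singleton τ' n ih =>
      intro h
      rw [← List.append_assoc] at h
      exact ih σ (Sg_snoc_ne hbud hsingle D h)

theorem childrenOK_single {f : Lbl} {τ : List ℕ} {X : Seq} {rX : Rule}
    (h0 : f (τ ++ [0]) = some (X, rX)) (hi : ∀ i : ℕ, i ≠ 0 → f (τ ++ [i]) = none) :
    childrenOK f τ [X] := by
  constructor
  · intro i
    have hl : ([X] : List Seq).length = 1 := rfl
    have hi0 : (i : ℕ) = 0 := by have := i.isLt; omega
    have hieq : i = ⟨0, by simp⟩ := Fin.ext hi0
    subst hieq
    exact ⟨rX, by simpa using h0⟩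
  · intro i hlen
    have hl : ([X] : List Seq).length = 1 := rfl
    exact hi i (by omega)

include hbud hsingle hg in
theorem Sg_wf : ∀ τ S r, Sg bad g1 gM g2 D.label τ = some (S, r) →
    (r = Rule.bud ∧ ∀ i : ℕ, Sg bad g1 gM g2 D.label (τ ++ [i]) = none) ∨
    (r ≠ Rule.bud ∧ ∃ prems, Inf r S prems ∧ childrenOK (Sg bad g1 gM g2 D.label) τ prems) := by
  intro τ S r h
  cases hd : dec τ with
  | none => rw [Sg_eq_none hd] at h; exact absurd h (by simp)
  | some pr =>
    obtain ⟨σ, o⟩ := pr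
    cases o with
    | none =>
      rw [Sg_eq_node hd] at h
      obtain ⟨r₀, hσ, hbr⟩ := nodeL_some h
      have hmid : ∀ i : ℕ, Sg bad g1 gM g2 D.label (τ ++ [i]) = midL bad gM g2 D.label σ i :=
        fun i => Sg_eq_mid (by rw [dec_snoc, hd])
      rcases hbr with ⟨hb, hr⟩ | ⟨hb, P, rc, hc, hI, hr⟩
      · subst hr
        by_cases hr0 : r = Rule.bud
        · left
          refine ⟨hr0, fun i => ?_⟩
          rw [hmid i]
          exact midL_none_of_child (D_bud_child_none D (hr0 ▸ hσ) i)
        · right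
          refine ⟨hr0, ?_⟩
          rcases D.wf σ S r hσ with ⟨hr', _⟩ | ⟨_, prems, hInf, hck⟩
          · exact absurd hr' hr0
          · refine ⟨prems, hInf, ?_, ?_⟩
            · intro i
              obtain ⟨rc, hc⟩ := hck.1 i
              exact ⟨Rule.weak, by rw [hmid]; exact midL_good hσ hb hc⟩
            · intro i hi
              rw [hmid]
              exact midL_none_of_child (hck.2 i hi)
      · subst hr
        right
        obtain ⟨hg1, hg2, hnb1, hnb2, hne1, hne2, hsim⟩ := hg S r₀ P hb hI
        refine ⟨hne1, [gM S r₀ P], hg1,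
          childrenOK_single (rX := g2 S r₀ P) ?_ ?_⟩
        · rw [hmid 0]
          exact midL_bad hσ hb hc hI
        · intro i hi
          rw [hmid]
          exact midL_none_of_child (D_bad_children hbud hsingle D hσ hb i (by omega))
    | some j =>
      rw [Sg_eq_mid hd] at h
      obtain ⟨S₀, r₀, P, rc, hσ, hc, hbr⟩ := midL_some h
      have hchild0 : Sg bad g1 gM g2 D.label (τ ++ [0]) = nodeL bad g1 D.label (σ ++ [j]) :=
        Sg_eq_node (by rw [dec_snoc, hd]; simp)
      have hchildi : ∀ i : ℕ, i ≠ 0 → Sg bad g1 gM g2 D.label (τ ++ [i]) = none := by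
        intro i hi
        apply Sg_eq_none
        rw [dec_snoc, hd]
        simp [hi]
      have hchildsome : ∃ r', nodeL bad g1 D.label (σ ++ [j]) = some (P, r') := by
        rcases nodeL_D (g1 := g1) hbud hsingle D hc with ⟨_, h2⟩ | ⟨_, _, _, _, _, h2⟩ <;> exact ⟨_, h2⟩
      obtain ⟨r', hr'⟩ := hchildsome
      rcases hbr with ⟨hb, hS, hrw⟩ | ⟨hb, hj, hI, hS, hrw⟩
      · subst hS; subst hrw
        right
        refine ⟨by simp, [S], Inf.weak (subset_refl _) (subset_refl _),
          childrenOK_single (rX := r') ?_ ?_⟩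
        · rw [hchild0]; exact hr'
        · exact hchildi
      · subst hS; subst hrw; subst hj
        right
        obtain ⟨hg1, hg2', hnb1, hnb2, hne1, hne2, hsim⟩ := hg S₀ r₀ P hb hI
        refine ⟨hne2, [P], hg2', childrenOK_single (rX := r') ?_ ?_⟩
        · rw [hchild0]; exact hr'
        · exact hchildi

include hbud hsingle in
theorem Sg_root : Sg bad g1 gM g2 D.label [] ≠ none := by
  have hd : dec [] = some (([] : List ℕ), none) := rfl
  rw [Sg_eq_node hd]
  cases hl : D.label [] with
  | none => exact absurd hl D.root_def
  | some pr =>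
    obtain ⟨S, r⟩ := pr
    rcases nodeL_D (g1 := g1) hbud hsingle D hl with ⟨_, h2⟩ | ⟨_, _, _, _, _, h2⟩ <;> simp [h2]

/-- The surgered derivation tree. -/
noncomputable def newD : DTree where
  label := Sg bad g1 gM g2 D.label
  root_def := Sg_root hbud hsingle D
  prefix_closed := Sg_prefix_closed hbud hsingle D
  wf := Sg_wf hbud hsingle hg D

end WithD

end Elim
namespace Elim

section WithP

variable {bad : Rule → Prop} {g1 : Seq → Rule → Seq → Rule} {gM : Seq → Rule → Seq → Seq}
  {g2 : Seq → Rule → Seq → Rule}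
  (hbud : ¬ bad Rule.bud) (hweak : ¬ bad Rule.weak)
  (hsingle : ∀ r S prems, bad r → Inf r S prems → ∃ P, prems = [P])
  (hg : GadgetSpec bad g1 gM g2)
  (P : PreProof)

set_option linter.unusedSectionVars false in
theorem Sg_fin : {τ | Sg bad g1 gM g2 P.D.label τ ≠ none}.Finite := by
  apply Set.Finite.subset
    (((P.fin.image enc).union ((P.fin.image enc).image List.dropLast)))
  intro τ h
  cases hd : dec τ with
  | none => exact absurd (Sg_eq_none hd) h
  | some pr =>
    obtain ⟨σ, o⟩ := pr
    cases o with
    | none =>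
        have h' : nodeL bad g1 P.D.label σ ≠ none := by rw [← Sg_eq_node hd]; exact h
        have hσ : P.D.label σ ≠ none := nodeL_ne_none h'
        rcases dec_inv τ σ none hd with ⟨_, hτ⟩ | ⟨j, hj, _⟩
        · exact Or.inl ⟨σ, hσ, hτ.symm⟩
        · exact absurd hj (by simp)
    | some j =>
        have h' : midL bad gM g2 P.D.label σ j ≠ none := by rw [← Sg_eq_mid hd]; exact h
        have hσ : P.D.label (σ ++ [j]) ≠ none := (midL_ne_none h').2
        rcases dec_inv τ σ (some j) hd with ⟨ho, _⟩ | ⟨j', hj', hτ⟩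
        · exact absurd ho (by simp)
        · have hjj : j' = j := by
            injection hj'.symm
          subst hjj
          right
          refine ⟨enc (σ ++ [j']), ⟨σ ++ [j'], hσ, rfl⟩, ?_⟩
          rw [enc_snoc, show enc σ ++ [j', 0] = (enc σ ++ [j']) ++ [0] by simp,
            List.dropLast_concat, hτ]

/-- Companion assignment for the surgered pre-proof. -/
noncomputable def newC : List ℕ → List ℕ := fun τ =>
  match dec τ with
  | some (σ, none) => enc (P.C σ)
  | _ => []

include hbud hsingle hg in
theorem Sg_comp : ∀ τ S, Sg bad g1 gM g2 P.D.label τ = some (S, Rule.bud) →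
    innerWith (Sg bad g1 gM g2 P.D.label) (newC P τ) S := by
  intro τ S h
  cases hd : dec τ with
  | none => rw [Sg_eq_none hd] at h; exact absurd h (by simp)
  | some pr =>
    obtain ⟨σ, o⟩ := pr
    cases o with
    | some j =>
        rw [Sg_eq_mid hd] at h
        obtain ⟨S₀, r₀, Q, rc, hσ, hc, hbr⟩ := midL_some h
        rcases hbr with ⟨_, _, hrw⟩ | ⟨hb, hj, hI, _, hrw⟩
        · exact absurd hrw.symm (by intro hh; exact Rule.noConfusion hh)
        · exact absurd hrw.symm ((hg S₀ r₀ Q hb hI).2.2.2.2.2.1)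
    | none =>
        rw [Sg_eq_node hd] at h
        obtain ⟨r₀, hσ, hbr⟩ := nodeL_some h
        have hr₀ : r₀ = Rule.bud := by
          rcases hbr with ⟨_, hr⟩ | ⟨hb, Q, rc, hc, hI, hr⟩
          · exact hr.symm
          · exact absurd hr.symm ((hg S r₀ Q hb hI).2.2.2.2.1)
        subst hr₀
        obtain ⟨rc, hl, hrc⟩ := P.comp σ S hσ
        have hC : newC P τ = enc (P.C σ) := by
          simp [newC, hd]
        rw [hC]
        have hSg : Sg bad g1 gM g2 P.D.label (enc (P.C σ)) =
            nodeL bad g1 P.D.label (P.C σ) := Sg_eq_node (dec_enc _)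
        rcases nodeL_D (g1 := g1) hbud hsingle P.D hl with ⟨_, h2⟩ |
          ⟨hb, Q, rc', hc, hI, h2⟩
        · exact ⟨rc, by rw [hSg]; exact h2, hrc⟩
        · exact ⟨g1 S rc Q, by rw [hSg]; exact h2, (hg S rc Q hb hI).2.2.2.2.1⟩

include hweak hg in
theorem Sg_nouses : ¬ usesRule (Sg bad g1 gM g2 P.D.label) bad := by
  rintro ⟨τ, S, r, h, hbr⟩
  cases hd : dec τ with
  | none => rw [Sg_eq_none hd] at h; exact absurd h (by simp)
  | some pr =>
    obtain ⟨σ, o⟩ := pr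
    cases o with
    | none =>
        rw [Sg_eq_node hd] at h
        obtain ⟨r₀, hσ, hbr'⟩ := nodeL_some h
        rcases hbr' with ⟨hb, hr⟩ | ⟨hb, Q, rc, hc, hI, hr⟩
        · exact hb (hr ▸ hbr)
        · exact (hg S r₀ Q hb hI).2.2.1 (hr ▸ hbr)
    | some j =>
        rw [Sg_eq_mid hd] at h
        obtain ⟨S₀, r₀, Q, rc, hσ, hc, hbr'⟩ := midL_some h
        rcases hbr' with ⟨hb, hS, hr⟩ | ⟨hb, hj, hI, hS, hr⟩
        · exact hweak (hr ▸ hbr)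
        · exact (hg S₀ r₀ Q hb hI).2.2.2.1 (hr ▸ hbr)

/-- The surgered pre-proof. -/
noncomputable def newP : PreProof where
  D := newD hbud hsingle hg P.D
  fin := Sg_fin P
  C := newC P
  comp := Sg_comp hbud hsingle hg P

end WithP

end Elim
namespace Elim

section Unfold

variable {bad : Rule → Prop} {g1 : Seq → Rule → Seq → Rule} {gM : Seq → Rule → Seq → Seq}
  {g2 : Seq → Rule → Seq → Rule}
  (hbud : ¬ bad Rule.bud) (hweak : ¬ bad Rule.weak)
  (hsingle : ∀ r S prems, bad r → Inf r S prems → ∃ P, prems = [P])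
  (hg : GadgetSpec bad g1 gM g2)
  (P : PreProof) (T : Lbl) (hT : IsUnfolding P T)

include hT in
theorem T_eq_D {σ : List ℕ} {S : Seq} {r : Rule} (h : P.D.label σ = some (S, r))
    (hr : r ≠ Rule.bud) : T σ = some (S, r) := by
  rw [hT.1 σ (by simp [h]) ?_, h]
  rintro ⟨S', hS'⟩
  rw [h] at hS'
  exact hr (congrArg Prod.snd (Option.some.inj hS'))

include hT in
theorem T_none {σ : List ℕ} (h : P.D.label σ = none)
    (hb : ∀ π, π <+: σ → ¬ budAt P.D.label π) : T σ = none :=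
  hT.2.2 σ h hb

include hT in
theorem child_agree {σ : List ℕ} (hσ : P.D.label σ ≠ none) (hb : ¬ budAt P.D.label σ)
    (j : ℕ) :
    (T (σ ++ [j]) = none ∧ P.D.label (σ ++ [j]) = none) ∨
      ∃ Q rT rD, T (σ ++ [j]) = some (Q, rT) ∧ P.D.label (σ ++ [j]) = some (Q, rD) := by
  cases hc : P.D.label (σ ++ [j]) with
  | none =>
      left
      refine ⟨T_none P T hT hc ?_, rfl⟩
      intro π hπ
      rcases List.prefix_concat_iff.mp hπ with h1 | h1
      · subst h1
        rintro ⟨S', hS'⟩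
        rw [hc] at hS'
        cases hS'
      · by_cases heq : π = σ
        · subst heq; exact hb
        · exact D_nobud_strict P.D hσ h1 heq
  | some pr =>
    obtain ⟨Q, rD⟩ := pr
    by_cases hrD : rD = Rule.bud
    · subst hrD
      obtain ⟨rc, hl, hrc⟩ := P.comp (σ ++ [j]) Q hc
      have h1 : T (σ ++ [j]) = T (P.C (σ ++ [j])) := by
        have := hT.2.1 (σ ++ [j]) [] ⟨Q, hc⟩
        simpa using this
      have h2 : T (P.C (σ ++ [j])) = some (Q, rc) := T_eq_D P T hT hl hrc
      exact Or.inr ⟨Q, rc, Rule.bud, by rw [h1, h2], rfl⟩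
    · exact Or.inr ⟨Q, rD, rD, T_eq_D P T hT hc hrD, rfl⟩

include hbud hT in
theorem Sg_cond1 : ∀ τ, Sg bad g1 gM g2 P.D.label τ ≠ none →
    ¬ budAt (Sg bad g1 gM g2 P.D.label) τ →
    Sg bad g1 gM g2 T τ = Sg bad g1 gM g2 P.D.label τ := by
  intro τ hne hnb
  cases hd : dec τ with
  | none => rw [Sg_eq_none hd, Sg_eq_none hd]
  | some pr =>
    obtain ⟨σ, o⟩ := pr
    cases o with
    | none =>
        have e1 : Sg bad g1 gM g2 T τ = nodeL bad g1 T σ := Sg_eq_node hd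
        have e2 : Sg bad g1 gM g2 P.D.label τ = nodeL bad g1 P.D.label σ := Sg_eq_node hd
        rw [e2] at hne
        rw [e1, e2]
        cases hσ : P.D.label σ with
        | none => exact absurd (nodeL_none_of hσ) hne
        | some prσ =>
          obtain ⟨S, r⟩ := prσ
          have hrb : r ≠ Rule.bud := by
            intro hr
            subst hr
            exact hnb ⟨S, by rw [e2]; exact nodeL_good hσ hbud⟩
          have hbσ : ¬ budAt P.D.label σ := by
            rintro ⟨S', hS'⟩
            rw [hσ] at hS'
            exact hrb (congrArg Prod.snd (Option.some.inj hS'))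
          have hTσ : T σ = some (S, r) := T_eq_D P T hT hσ hrb
          apply nodeL_ext (by rw [hTσ, hσ])
          rcases child_agree P T hT (by simp [hσ]) hbσ 0 with ⟨h1, h2⟩ |
            ⟨Q, rT, rD, h1, h2⟩
          · exact Or.inl ⟨h1, h2⟩
          · exact Or.inr ⟨Q, rT, rD, h1, h2⟩
    | some j =>
        have e1 : Sg bad g1 gM g2 T τ = midL bad gM g2 T σ j := Sg_eq_mid hd
        have e2 : Sg bad g1 gM g2 P.D.label τ = midL bad gM g2 P.D.label σ j := Sg_eq_mid hd
        rw [e2] at hne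
        rw [e1, e2]
        cases hσ : P.D.label σ with
        | none => exact absurd (midL_none_of hσ) hne
        | some prσ =>
          obtain ⟨S, r⟩ := prσ
          cases hc : P.D.label (σ ++ [j]) with
          | none => exact absurd (midL_none_of_child hc) hne
          | some prc =>
            have hrb : r ≠ Rule.bud := by
              intro hr
              subst hr
              rw [D_bud_child_none P.D hσ j] at hc
              cases hc
            have hbσ : ¬ budAt P.D.label σ := by
              rintro ⟨S', hS'⟩
              rw [hσ] at hS'
              exact hrb (congrArg Prod.snd (Option.some.inj hS'))
            have hTσ : T σ = some (S, r) := T_eq_D P T hT hσ hrb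
            apply midL_ext (by rw [hTσ, hσ])
            rcases child_agree P T hT (by simp [hσ]) hbσ j with ⟨h1, h2⟩ |
              ⟨Q, rT, rD, h1, h2⟩
            · exact Or.inl ⟨h1, h2⟩
            · exact Or.inr ⟨Q, rT, rD, h1, h2⟩

end Unfold

end Elim
namespace Elim

section Unfold2

variable {bad : Rule → Prop} {g1 : Seq → Rule → Seq → Rule} {gM : Seq → Rule → Seq → Seq}
  {g2 : Seq → Rule → Seq → Rule}
  (hbud : ¬ bad Rule.bud) (hweak : ¬ bad Rule.weak)
  (hsingle : ∀ r S prems, bad r → Inf r S prems → ∃ P, prems = [P])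
  (hg : GadgetSpec bad g1 gM g2)

variable (bad g1 gM g2) in
/-- The surgered labeling of the subtree of `f` rooted at `ρ`. -/
noncomputable def SgFrom (f : Lbl) (ρ : List ℕ) : Lbl := fun l =>
  match dec l with
  | some (σ, none) => nodeL bad g1 f (ρ ++ σ)
  | some (σ, some j) => midL bad gM g2 f (ρ ++ σ) j
  | none => none

theorem Sg_enc_append (f : Lbl) (ρ l : List ℕ) :
    Sg bad g1 gM g2 f (enc ρ ++ l) = SgFrom bad g1 gM g2 f ρ l := by
  cases hd : dec l with
  | none =>
      have : dec (enc ρ ++ l) = none := by rw [dec_enc_append, hd]; rfl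
      simp [Sg, SgFrom, this, hd]
  | some pr =>
    obtain ⟨σ, o⟩ := pr
    have : dec (enc ρ ++ l) = some (ρ ++ σ, o) := by rw [dec_enc_append, hd]; rfl
    cases o with
    | none => rw [Sg_eq_node this]; simp [SgFrom, hd]
    | some j => rw [Sg_eq_mid this]; simp [SgFrom, hd]

theorem SgFrom_ext {f f' : Lbl} {ρ ρ' : List ℕ}
    (h : ∀ χ, f (ρ ++ χ) = f' (ρ' ++ χ)) (l : List ℕ) :
    SgFrom bad g1 gM g2 f ρ l = SgFrom bad g1 gM g2 f' ρ' l := by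
  have hch : ∀ (σ : List ℕ) (j : ℕ),
      (f ((ρ ++ σ) ++ [j]) = none ∧ f' ((ρ' ++ σ) ++ [j]) = none) ∨
        ∃ Q rc rc', f ((ρ ++ σ) ++ [j]) = some (Q, rc) ∧
          f' ((ρ' ++ σ) ++ [j]) = some (Q, rc') := by
    intro σ j
    have h1 : f ((ρ ++ σ) ++ [j]) = f' ((ρ' ++ σ) ++ [j]) := by
      rw [List.append_assoc, List.append_assoc]
      exact h (σ ++ [j])
    cases hc : f' ((ρ' ++ σ) ++ [j]) with
    | none => exact Or.inl ⟨h1.trans hc, rfl⟩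
    | some pr =>
        obtain ⟨Q, rc'⟩ := pr
        exact Or.inr ⟨Q, rc', rc', h1.trans hc, rfl⟩
  cases hd : dec l with
  | none => simp [SgFrom, hd]
  | some pr =>
    obtain ⟨σ, o⟩ := pr
    cases o with
    | none =>
        have e1 : SgFrom bad g1 gM g2 f ρ l = nodeL bad g1 f (ρ ++ σ) := by
          simp [SgFrom, hd]
        have e2 : SgFrom bad g1 gM g2 f' ρ' l = nodeL bad g1 f' (ρ' ++ σ) := by
          simp [SgFrom, hd]
        rw [e1, e2]
        exact nodeL_ext (h σ) (hch σ 0)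
    | some j =>
        have e1 : SgFrom bad g1 gM g2 f ρ l = midL bad gM g2 f (ρ ++ σ) j := by
          simp [SgFrom, hd]
        have e2 : SgFrom bad g1 gM g2 f' ρ' l = midL bad gM g2 f' (ρ' ++ σ) j := by
          simp [SgFrom, hd]
        rw [e1, e2]
        exact midL_ext (h σ) (hch σ j)

set_option linter.unusedSectionVars false in
include hbud hg in
theorem Sg_cond2 (P : PreProof) (T : Lbl) (hT : IsUnfolding P T) :
    ∀ σ₁ σ₂ : List ℕ, budAt (Sg bad g1 gM g2 P.D.label) σ₁ →
      Sg bad g1 gM g2 T (σ₁ ++ σ₂) = Sg bad g1 gM g2 T (newC P σ₁ ++ σ₂) := by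
  rintro σ₁ σ₂ ⟨S, hS⟩
  cases hd : dec σ₁ with
  | none => rw [Sg_eq_none hd] at hS; exact absurd hS (by simp)
  | some pr =>
    obtain ⟨σ, o⟩ := pr
    cases o with
    | some j =>
        rw [Sg_eq_mid hd] at hS
        obtain ⟨S₀, r₀, Q, rc, hσ, hc, hbr⟩ := midL_some hS
        rcases hbr with ⟨_, _, hrw⟩ | ⟨hb, hj, hI, _, hrw⟩
        · exact absurd hrw.symm (by intro hh; exact Rule.noConfusion hh)
        · exact absurd hrw.symm ((hg S₀ r₀ Q hb hI).2.2.2.2.2.1)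
    | none =>
        rw [Sg_eq_node hd] at hS
        obtain ⟨r₀, hσ, hbr⟩ := nodeL_some hS
        have hr₀ : r₀ = Rule.bud := by
          rcases hbr with ⟨_, hr⟩ | ⟨hb, Q, rc, hc, hI, hr⟩
          · exact hr.symm
          · exact absurd hr.symm ((hg S r₀ Q hb hI).2.2.2.2.1)
        subst hr₀
        have hσ₁ : σ₁ = enc σ := by
          rcases dec_inv σ₁ σ none hd with ⟨_, hτ⟩ | ⟨j, hj, _⟩
          · exact hτ
          · exact absurd hj (by simp)
        have hC : newC P σ₁ = enc (P.C σ) := by simp [newC, hd]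
        rw [hC, hσ₁, Sg_enc_append, Sg_enc_append]
        apply SgFrom_ext
        intro χ
        exact hT.2.1 σ χ ⟨S, hσ⟩

theorem enc_prefix {π σ : List ℕ} (h : π <+: σ) : enc π <+: enc σ := by
  obtain ⟨rest, hrest⟩ := h
  exact ⟨enc rest, by rw [← enc_append, hrest]⟩

set_option linter.unusedSectionVars false in
include hbud hsingle in
theorem Sg_cond3 (P : PreProof) (T : Lbl) (hT : IsUnfolding P T) :
    ∀ τ, Sg bad g1 gM g2 P.D.label τ = none →
      (∀ σ₁, σ₁ <+: τ → ¬ budAt (Sg bad g1 gM g2 P.D.label) σ₁) →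
      Sg bad g1 gM g2 T τ = none := by
  intro τ hnone hnb
  -- any old node whose encoding is a prefix of τ is not a bud
  have hkey : ∀ π, enc π <+: τ → ¬ budAt P.D.label π := by
    rintro π hπ ⟨S, hS⟩
    exact hnb (enc π) hπ ⟨S, by rw [Sg_eq_node (dec_enc π)]; exact nodeL_good hS hbud⟩
  cases hd : dec τ with
  | none => exact Sg_eq_none hd
  | some pr =>
    obtain ⟨σ, o⟩ := pr
    have hencστ : enc σ <+: τ := by
      rcases dec_inv τ σ o hd with ⟨_, hτ⟩ | ⟨j, hj, hτ⟩ <;> subst hτ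
      · exact List.prefix_refl _
      · exact ⟨[j], rfl⟩
    have hTnone : P.D.label σ = none → T σ = none := by
      intro h0
      apply T_none P T hT h0
      intro π hπ
      by_cases heq : π = σ
      · subst heq
        rintro ⟨S, hS⟩
        rw [h0] at hS
        cases hS
      · exact hkey π ((enc_prefix hπ).trans hencστ)
    cases o with
    | none =>
      have e1 : Sg bad g1 gM g2 T τ = nodeL bad g1 T σ := Sg_eq_node hd
      have e2 : Sg bad g1 gM g2 P.D.label τ = nodeL bad g1 P.D.label σ := Sg_eq_node hd
      rw [e2] at hnone
      rw [e1]
      cases hσ : P.D.label σ with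
      | none => exact nodeL_none_of (hTnone hσ)
      | some prσ =>
        obtain ⟨S, r⟩ := prσ
        have hbσ : ¬ budAt P.D.label σ := hkey σ hencστ
        have hrb : r ≠ Rule.bud := by
          intro hr; subst hr; exact hbσ ⟨S, hσ⟩
        have hTσ : T σ = some (S, r) := T_eq_D P T hT hσ hrb
        by_cases hb : bad r
        · rcases child_agree P T hT (by simp [hσ]) hbσ 0 with ⟨h1, h2⟩ |
            ⟨Q, rT, rD, h1, h2⟩
          · exact nodeL_bad_none hTσ hb h1
          · by_cases hI : Inf r S [Q]
            · rw [nodeL_bad hσ hb h2 hI] at hnone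
              exact absurd hnone (by simp)
            · exact nodeL_bad_notInf hTσ hb h1 hI
        · rw [nodeL_good hσ hb] at hnone
          exact absurd hnone (by simp)
    | some j =>
      have e1 : Sg bad g1 gM g2 T τ = midL bad gM g2 T σ j := Sg_eq_mid hd
      have e2 : Sg bad g1 gM g2 P.D.label τ = midL bad gM g2 P.D.label σ j := Sg_eq_mid hd
      rw [e2] at hnone
      rw [e1]
      cases hσ : P.D.label σ with
      | none => exact midL_none_of (hTnone hσ)
      | some prσ =>
        obtain ⟨S, r⟩ := prσ
        have hbσ : ¬ budAt P.D.label σ := hkey σ hencστ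
        have hrb : r ≠ Rule.bud := by
          intro hr; subst hr; exact hbσ ⟨S, hσ⟩
        have hTσ : T σ = some (S, r) := T_eq_D P T hT hσ hrb
        rcases child_agree P T hT (by simp [hσ]) hbσ j with ⟨h1, h2⟩ |
          ⟨Q, rT, rD, h1, h2⟩
        · exact midL_none_of_child h1
        · by_cases hb : bad r
          · by_cases hI : j = 0 ∧ Inf r S [Q]
            · obtain ⟨hj, hI⟩ := hI
              subst hj
              rw [midL_bad hσ hb h2 hI] at hnone
              exact absurd hnone (by simp)
            · exact midL_bad_no hTσ hb h1 hI
          · rw [midL_good hσ hb h2] at hnone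
            exact absurd hnone (by simp)

end Unfold2

end Elim
namespace Elim

theorem pair_inj {α β : Type _} {x x' : α} {y y' : β}
    (h : (some (x, y) : Option (α × β)) = some (x', y')) : x = x' ∧ y = y' := by
  have := Option.some.inj h
  exact ⟨congrArg Prod.fst this, congrArg Prod.snd this⟩

theorem snoc_inj {l : List ℕ} {a c : ℕ} (h : l ++ [a] = l ++ [c]) : a = c := by
  have := List.append_cancel_left h
  simpa using this

section GTCsec

variable {bad : Rule → Prop} {g1 : Seq → Rule → Seq → Rule} {gM : Seq → Rule → Seq → Seq}
  {g2 : Seq → Rule → Seq → Rule}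
  (hprogr : ∀ r, bad r → ∀ j a b, ¬ progStep r j a b)
  (hg : GadgetSpec bad g1 gM g2)

include hprogr hg in
theorem Sg_GTC (T : Lbl) (hG : GTC T) : GTC (Sg bad g1 gM g2 T) := by
  classical
  intro q hq
  obtain ⟨hq1, hq2⟩ := hq
  have hex : ∀ i, ∃ s : List ℕ × Option ℕ, dec (q i) = some s := by
    intro i
    cases hd : dec (q i) with
    | none => exact absurd (Sg_eq_none hd) (hq1 i)
    | some s => exact ⟨s, rfl⟩
  choose st hst using hex
  choose stepn hstepn using hq2
  set σc : ℕ → List ℕ := fun i => (st i).1 with hσcdef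
  set oc : ℕ → Option ℕ := fun i => (st i).2 with hocdef
  have hst' : ∀ i, dec (q i) = some (σc i, oc i) := fun i => hst i
  have hA : ∀ i, oc i = none → σc (i + 1) = σc i ∧ oc (i + 1) = some (stepn i) := by
    intro i h2
    have hd : dec (q (i + 1)) = some (σc i, some (stepn i)) := by
      rw [hstepn i, dec_snoc, hst' i, h2]
    have h3 := hst' (i + 1)
    rw [hd] at h3
    have h4 := pair_inj h3
    exact ⟨h4.1.symm, h4.2.symm⟩
  have hB : ∀ i j, oc i = some j →
      stepn i = 0 ∧ σc (i + 1) = σc i ++ [j] ∧ oc (i + 1) = none := by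
    intro i j h2
    by_cases hn : stepn i = 0
    · have hd : dec (q (i + 1)) = some (σc i ++ [j], none) := by
        rw [hstepn i, dec_snoc, hst' i, h2]
        simp [hn]
      have h3 := hst' (i + 1)
      rw [hd] at h3
      have h4 := pair_inj h3
      exact ⟨hn, h4.1.symm, h4.2.symm⟩
    · exfalso
      apply hq1 (i + 1)
      apply Sg_eq_none
      rw [hstepn i, dec_snoc, hst' i, h2]
      simp [hn]
  have hnode : ∀ i, oc i = none → Sg bad g1 gM g2 T (q i) = nodeL bad g1 T (σc i) := by
    intro i h
    apply Sg_eq_node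
    have := hst' i
    rwa [h] at this
  have hmidl : ∀ i j, oc i = some j →
      Sg bad g1 gM g2 T (q i) = midL bad gM g2 T (σc i) j := by
    intro i j h
    apply Sg_eq_mid
    have := hst' i
    rwa [h] at this
  set p : ℕ → List ℕ := fun j => σc (2 * j) with hpdef
  have hp : ∀ j, p j = σc (2 * j) := fun j => by rw [hpdef]
  set b : ℕ := if oc 0 = none then 0 else 1 with hbdef
  have hb01 : b ≤ 1 := by rw [hbdef]; split <;> omega
  have halt : ∀ i, (oc (i + 1) = none) ↔ ¬ (oc i = none) := by
    intro i
    constructor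
    · intro h h0
      rw [(hA i h0).2] at h
      cases h
    · intro h
      obtain ⟨j, hj⟩ := Option.ne_none_iff_exists'.mp h
      exact (hB i j hj).2.2
  have hpar : ∀ i, (oc i = none) ↔ (i + b) % 2 = 0 := by
    intro i
    induction i with
    | zero =>
        by_cases h0 : oc 0 = none
        · rw [hbdef, if_pos h0]; simp [h0]
        · rw [hbdef, if_neg h0]
          constructor
          · intro h; exact absurd h h0
          · intro h; omega
    | succ n ih =>
        rw [halt n, ih]
        constructor
        · intro h; omega
        · intro h h2; omega
  have hR : ∀ i, σc i = p ((i + b) / 2) := by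
    intro i
    induction i with
    | zero =>
        rw [hp]
        have h2 : 2 * ((0 + b) / 2) = 0 := by omega
        rw [h2]
    | succ n ih =>
        by_cases h0 : oc n = none
        · have he : (n + b) % 2 = 0 := (hpar n).mp h0
          have h2 : (n + 1 + b) / 2 = (n + b) / 2 := by omega
          rw [(hA n h0).1, ih, h2]
        · obtain ⟨j, hj⟩ := Option.ne_none_iff_exists'.mp h0
          have he : (n + b) % 2 = 1 := by
            have h' : ¬ ((n + b) % 2 = 0) := fun hh => h0 ((hpar n).mpr hh)
            omega
          have hcase : 2 * ((n + 1 + b) / 2) = n + 1 ∨ 2 * ((n + 1 + b) / 2) = n + 2 := by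
            omega
          rw [hp]
          rcases hcase with hc | hc
          · rw [hc]
          · rw [hc]
            have hnone : oc (n + 1) = none := (hB n j hj).2.2
            exact ((hA (n + 1) hnone).1).symm
  have hTnn : ∀ i, T (σc i) ≠ none := by
    intro i
    cases ho : oc i with
    | none =>
        have h1 := hq1 i
        rw [hnode i ho] at h1
        exact nodeL_ne_none h1
    | some j =>
        have h1 := hq1 i
        rw [hmidl i j ho] at h1
        exact (midL_ne_none h1).1
  have hpstep2 : ∀ i, σc (i + 2) = σc i ++
      [if oc i = none then stepn i else (oc i).getD 0] := by
    intro i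
    cases ho : oc i with
    | none =>
        obtain ⟨ha1, ha2⟩ := hA i ho
        obtain ⟨_, hb2, _⟩ := hB (i + 1) (stepn i) ha2
        rw [show i + 2 = i + 1 + 1 from rfl, hb2, ha1]
        simp [ho]
    | some j =>
        obtain ⟨_, hb2, hb3⟩ := hB i j ho
        obtain ⟨ha1, _⟩ := hA (i + 1) hb3
        rw [show i + 2 = i + 1 + 1 from rfl, ha1, hb2]
        simp [ho]
  have hpT : IsInfPath T p := by
    constructor
    · intro j; rw [hp]; exact hTnn (2 * j)
    · intro j
      refine ⟨if oc (2 * j) = none then stepn (2 * j) else (oc (2 * j)).getD 0, ?_⟩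
      rw [hp, hp, show 2 * (j + 1) = 2 * j + 2 by ring]
      exact hpstep2 (2 * j)
  obtain ⟨k, τ, htr, hprg⟩ := hG p hpT
  set badP : ℕ → Prop := fun j => ∃ S r, T (p j) = some (S, r) ∧ bad r with hbadPdef
  have hKB : ∀ i S r, T (σc i) = some (S, r) → bad r →
      ∃ P rc, T (σc i ++ [0]) = some (P, rc) ∧ Inf r S [P] := by
    intro i S r hl hb
    cases ho : oc i with
    | none =>
        have h1 := hq1 i
        rw [hnode i ho] at h1
        cases hc : T (σc i ++ [0]) with
        | none => exact absurd (nodeL_bad_none hl hb hc) h1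
        | some pc =>
          obtain ⟨P, rc⟩ := pc
          by_cases hI : Inf r S [P]
          · exact ⟨P, rc, rfl, hI⟩
          · exact absurd (nodeL_bad_notInf hl hb hc hI) h1
    | some j =>
        have h1 := hq1 i
        rw [hmidl i j ho] at h1
        cases hc : T (σc i ++ [j]) with
        | none => exact absurd (midL_none_of_child hc) h1
        | some pc =>
          obtain ⟨P, rc⟩ := pc
          by_cases hI : j = 0 ∧ Inf r S [P]
          · obtain ⟨hj0, hI⟩ := hI
            subst hj0
            exact ⟨P, rc, hc, hI⟩

          · exact absurd (midL_bad_no hl hb hc hI) h1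
  have hKj : ∀ i j, oc i = some j → ∀ S r, T (σc i) = some (S, r) → bad r → j = 0 := by
    intro i j ho S r hl hb
    have h1 := hq1 i
    rw [hmidl i j ho] at h1
    cases hc : T (σc i ++ [j]) with
    | none => exact absurd (midL_none_of_child hc) h1
    | some pc =>
      obtain ⟨P, rc⟩ := pc
      by_cases hI : j = 0 ∧ Inf r S [P]
      · exact hI.1
      · exact absurd (midL_bad_no hl hb hc hI) h1
  have hbadfacts : ∀ j, badP j → p (j + 1) = p j ++ [0] ∧
      ∃ S r P rc, T (p j) = some (S, r) ∧ bad r ∧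
        T (p j ++ [0]) = some (P, rc) ∧ Inf r S [P] := by
    intro j hbp
    rw [hbadPdef] at hbp
    obtain ⟨S, r, hS, hb⟩ := hbp
    have hjj : (2 * j + 1 - b + b) / 2 = j := by omega
    have hparity : (2 * j + 1 - b + b) % 2 = 1 := by omega
    have hoc : ¬ (oc (2 * j + 1 - b) = none) := by
      intro h
      rw [hpar] at h
      omega
    obtain ⟨n, hn⟩ := Option.ne_none_iff_exists'.mp hoc
    have hσ : σc (2 * j + 1 - b) = p j := by rw [hR, hjj]
    have hn0 : n = 0 := hKj _ n hn S r (by rw [hσ]; exact hS) hb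
    subst hn0
    obtain ⟨_, hb2, _⟩ := hB _ 0 hn
    have hnext : σc (2 * j + 1 - b + 1) = p (j + 1) := by
      rw [hR, show (2 * j + 1 - b + 1 + b) / 2 = j + 1 by omega]
    have hp1 : p (j + 1) = p j ++ [0] := by rw [← hnext, hb2, hσ]
    obtain ⟨P, rc, hc, hI⟩ := hKB _ S r (by rw [hσ]; exact hS) hb
    rw [hσ] at hc
    exact ⟨hp1, S, r, P, rc, hS, hb, hc, hI⟩
  set Q : ℕ → Fm → Prop := fun j μ => ∀ S r P rc, T (p j) = some (S, r) →
      T (p j ++ [0]) = some (P, rc) →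
      μ ∈ (gM S r P).ant ∧ isIndAtom μ ∧
        connStep (g1 S r P) 0 (τ j) μ ∧ connStep (g2 S r P) 0 μ (τ (j + 1)) with hQdef
  set μf : ℕ → Fm := fun j => if h : ∃ μ, Q j μ then h.choose else τ j with hμfdef
  have hμfQ : ∀ j, (∃ μ, Q j μ) → Q j (μf j) := by
    intro j h
    simp only [hμfdef]
    rw [dif_pos h]
    exact h.choose_spec
  have hμex : ∀ j, k ≤ j → badP j → ∃ μ, Q j μ := by
    intro j hk hbp
    obtain ⟨hp1, S, r, P, rc, hS, hb, hc, hI⟩ := hbadfacts j hbp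
    obtain ⟨S', r', jd, hS', hmem, hind, hpst, hconn⟩ := htr j hk
    obtain ⟨rfl, rfl⟩ := pair_inj (hS.symm.trans hS')
    have hjd : jd = 0 := snoc_inj (hpst.symm.trans hp1)
    subst hjd
    obtain ⟨S'', r'', jd2, hS'', hmem', hind', _, _⟩ := htr (j + 1) (by omega)
    have hS''2 : T (p j ++ [0]) = some (S'', r'') := by rw [← hp1]; exact hS''
    obtain ⟨rfl, rfl⟩ := pair_inj (hc.symm.trans hS''2)
    obtain ⟨μ, hμ1, hμ2, hμ3, hμ4⟩ :=
      (hg S r P hb hI).2.2.2.2.2.2 (τ j) (τ (j + 1)) hmem hind hmem' hind' hconn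
    refine ⟨μ, ?_⟩
    rw [hQdef]
    intro S₁ r₁ P₁ rc₁ e1 e2
    obtain ⟨rfl, rfl⟩ := pair_inj (hS.symm.trans e1)
    obtain ⟨rfl, rfl⟩ := pair_inj (hc.symm.trans e2)
    exact ⟨hμ1, hμ2, hμ3, hμ4⟩
  set τ₂ : ℕ → Fm := fun i => if oc i = none then τ ((i + b) / 2)
      else if badP ((i + b) / 2) then μf ((i + b) / 2) else τ ((i + b) / 2 + 1) with hτ₂def
  have hτ₂node : ∀ i, oc i = none → τ₂ i = τ ((i + b) / 2) := by
    intro i h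
    simp only [hτ₂def]
    rw [if_pos h]
  have hτ₂midb : ∀ i, ¬ (oc i = none) → badP ((i + b) / 2) → τ₂ i = μf ((i + b) / 2) := by
    intro i h hb'
    simp only [hτ₂def]
    rw [if_neg h, if_pos hb']
  have hτ₂midg : ∀ i, ¬ (oc i = none) → ¬ badP ((i + b) / 2) →
      τ₂ i = τ ((i + b) / 2 + 1) := by
    intro i h hb'
    simp only [hτ₂def]
    rw [if_neg h, if_neg hb']
  refine ⟨2 * k + 2, τ₂, ?_, ?_⟩
  · -- the trace condition
    intro i hi
    have hjk : k + 1 ≤ (i + b) / 2 := by omega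
    have hσp : σc i = p ((i + b) / 2) := hR i
    obtain ⟨S, r, jd, hS, hmem, hind, hpst, hconn⟩ := htr ((i + b) / 2) (by omega)
    by_cases ho : oc i = none
    · -- node time
      have heven : (i + b) % 2 = 0 := (hpar i).mp ho
      obtain ⟨hnext1, hoc1⟩ := hA i ho
      have hqs : q (i + 1) = q i ++ [stepn i] := hstepn i
      have hidx1 : (i + 1 + b) / 2 = (i + b) / 2 := by omega
      have hnext2 : σc (i + 2) = p ((i + b) / 2 + 1) := by
        rw [hR (i + 2), show (i + 2 + b) / 2 = (i + b) / 2 + 1 by omega]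
      have hstep2 : σc (i + 2) = σc i ++ [stepn i] := by
        have h' := hpstep2 i
        rw [if_pos ho] at h'
        exact h'
      have hpj1 : p ((i + b) / 2 + 1) = p ((i + b) / 2) ++ [stepn i] := by
        rw [← hnext2, hstep2, hσp]
      have hjd : stepn i = jd := snoc_inj (hpj1.symm.trans hpst)
      by_cases hb' : bad r
      · -- bad node
        have hbp : badP ((i + b) / 2) := by
          rw [hbadPdef]; exact ⟨S, r, hS, hb'⟩
        have hn0 : stepn i = 0 := by
          apply hKj (i + 1) (stepn i) hoc1 S r _ hb'
          rw [hnext1, hσp]; exact hS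
        obtain ⟨P, rc, hc, hI⟩ := hKB i S r (by rw [hσp]; exact hS) hb'
        have hcp : T (p ((i + b) / 2) ++ [0]) = some (P, rc) := by
          rw [← hσp]; exact hc
        have hlab : Sg bad g1 gM g2 T (q i) = some (S, g1 S r P) := by
          rw [hnode i ho]
          exact nodeL_bad (by rw [hσp]; exact hS) hb' hc hI
        have hQ' := hμfQ _ (hμex _ (by omega) hbp)
        rw [hQdef] at hQ'
        have hQs := hQ' S r P rc hS hcp
        have hτi : τ₂ i = τ ((i + b) / 2) := hτ₂node i ho
        have hτi1 : τ₂ (i + 1) = μf ((i + b) / 2) := by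
          rw [hτ₂midb (i + 1) (by rw [hoc1]; simp) (by rw [hidx1]; exact hbp), hidx1]
        refine ⟨S, g1 S r P, 0, hlab, ?_, ?_, ?_, ?_⟩
        · rw [hτi]; exact hmem
        · rw [hτi]; exact hind
        · rw [hqs, hn0]
        · rw [hτi, hτi1]
          exact hQs.2.2.1
      · -- good node
        have hlab : Sg bad g1 gM g2 T (q i) = some (S, r) := by
          rw [hnode i ho]
          exact nodeL_good (by rw [hσp]; exact hS) hb'
        have hnbp : ¬ badP ((i + b) / 2) := by
          rw [hbadPdef]
          rintro ⟨S₁, r₁, e₁, hb₁⟩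
          obtain ⟨rfl, rfl⟩ := pair_inj (hS.symm.trans e₁)
          exact hb' hb₁
        have hτi : τ₂ i = τ ((i + b) / 2) := hτ₂node i ho
        have hτi1 : τ₂ (i + 1) = τ ((i + b) / 2 + 1) := by
          rw [hτ₂midg (i + 1) (by rw [hoc1]; simp) (by rw [hidx1]; exact hnbp), hidx1]
        refine ⟨S, r, jd, hlab, ?_, ?_, ?_, ?_⟩
        · rw [hτi]; exact hmem
        · rw [hτi]; exact hind
        · rw [hqs, hjd]
        · rw [hτi, hτi1]
          exact hconn
    · -- mid time
      obtain ⟨j₀, hj₀⟩ := Option.ne_none_iff_exists'.mp ho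
      have hodd : (i + b) % 2 = 1 := by
        have h' : ¬ ((i + b) % 2 = 0) := fun hh => ho ((hpar i).mpr hh)
        omega
      obtain ⟨hn0', hb2, hb3⟩ := hB i j₀ hj₀
      have hidx1 : (i + 1 + b) / 2 = (i + b) / 2 + 1 := by omega
      have hnext : σc (i + 1) = p ((i + b) / 2 + 1) := by rw [hR (i + 1), hidx1]
      have hpj1 : p ((i + b) / 2 + 1) = p ((i + b) / 2) ++ [j₀] := by
        rw [← hnext, hb2, hσp]
      have hjd : j₀ = jd := snoc_inj (hpj1.symm.trans hpst)
      have hqs : q (i + 1) = q i ++ [stepn i] := hstepn i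
      by_cases hb' : bad r
      · -- bad mid
        have hj00 : j₀ = 0 := hKj i j₀ hj₀ S r (by rw [hσp]; exact hS) hb'
        subst hj00
        have hbp : badP ((i + b) / 2) := by
          rw [hbadPdef]; exact ⟨S, r, hS, hb'⟩
        obtain ⟨P, rc, hc, hI⟩ := hKB i S r (by rw [hσp]; exact hS) hb'
        have hcp : T (p ((i + b) / 2) ++ [0]) = some (P, rc) := by
          rw [← hσp]; exact hc
        have hlab : Sg bad g1 gM g2 T (q i) = some (gM S r P, g2 S r P) := by
          rw [hmidl i 0 hj₀]
          exact midL_bad (by rw [hσp]; exact hS) hb' hc hI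
        have hQ' := hμfQ _ (hμex _ (by omega) hbp)
        rw [hQdef] at hQ'
        have hQs := hQ' S r P rc hS hcp
        have hτi : τ₂ i = μf ((i + b) / 2) := hτ₂midb i ho hbp
        have hτi1 : τ₂ (i + 1) = τ ((i + b) / 2 + 1) := by
          rw [hτ₂node (i + 1) hb3, hidx1]
        refine ⟨gM S r P, g2 S r P, 0, hlab, ?_, ?_, ?_, ?_⟩
        · rw [hτi]; exact hQs.1
        · rw [hτi]; exact hQs.2.1
        · rw [hqs, hn0']
        · rw [hτi, hτi1]
          exact hQs.2.2.2
      · -- good mid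
        obtain ⟨S'', r'', jd2, hS'', hmem', hind', _, _⟩ :=
          htr ((i + b) / 2 + 1) (by omega)
        have hc2 : T (p ((i + b) / 2) ++ [j₀]) = some (S'', r'') := by
          rw [← hpj1]; exact hS''
        have hlab : Sg bad g1 gM g2 T (q i) = some (S'', Rule.weak) := by
          rw [hmidl i j₀ hj₀]
          exact midL_good (by rw [hσp]; exact hS) hb' (by rw [hσp]; exact hc2)
        have hnbp : ¬ badP ((i + b) / 2) := by
          rw [hbadPdef]
          rintro ⟨S₁, r₁, e₁, hb₁⟩
          obtain ⟨rfl, rfl⟩ := pair_inj (hS.symm.trans e₁)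
          exact hb' hb₁
        have hτi : τ₂ i = τ ((i + b) / 2 + 1) := hτ₂midg i ho hnbp
        have hτi1 : τ₂ (i + 1) = τ ((i + b) / 2 + 1) := by
          rw [hτ₂node (i + 1) hb3, hidx1]
        refine ⟨S'', Rule.weak, 0, hlab, ?_, ?_, ?_, ?_⟩
        · rw [hτi]; exact hmem'
        · rw [hτi]; exact hind'
        · rw [hqs, hn0']
        · rw [hτi, hτi1]
          show τ ((i + b) / 2 + 1) = τ ((i + b) / 2 + 1)
          rfl
  · -- progress
    intro n
    obtain ⟨j, hj1, hj2, hpa⟩ := hprg (n + k + 2)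
    obtain ⟨S, r, jd, hS, hpst, hps⟩ := hpa
    have hb' : ¬ bad r := fun hb'' => hprogr r hb'' jd _ _ hps
    have hib : 2 * j - b + b = 2 * j := by omega
    have hieven : (2 * j - b + b) % 2 = 0 := by omega
    have hoc : oc (2 * j - b) = none := (hpar _).mpr hieven
    have hij : (2 * j - b + b) / 2 = j := by omega
    have hσp : σc (2 * j - b) = p j := by rw [hR, hij]
    obtain ⟨hnext1, hoc1⟩ := hA _ hoc
    have hstep2 : σc (2 * j - b + 2) = σc (2 * j - b) ++ [stepn (2 * j - b)] := by
      have h' := hpstep2 (2 * j - b)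
      rw [if_pos hoc] at h'
      exact h'
    have hnext2 : σc (2 * j - b + 2) = p (j + 1) := by
      rw [hR, show (2 * j - b + 2 + b) / 2 = j + 1 by omega]
    have hpj1 : p (j + 1) = p j ++ [stepn (2 * j - b)] := by
      rw [← hnext2, hstep2, hσp]
    have hjd : stepn (2 * j - b) = jd := snoc_inj (hpj1.symm.trans hpst)
    have hnbp : ¬ badP j := by
      rw [hbadPdef]
      rintro ⟨S₁, r₁, e₁, hb₁⟩
      obtain ⟨rfl, rfl⟩ := pair_inj (hS.symm.trans e₁)
      exact hb' hb₁
    have hidx : (2 * j - b + 1 + b) / 2 = j := by omega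
    refine ⟨2 * j - b, by omega, by omega, S, r, jd, ?_, ?_, ?_⟩
    · rw [hnode _ hoc]
      exact nodeL_good (by rw [hσp]; exact hS) hb'
    · rw [hstepn, hjd]
    · have h1 : τ₂ (2 * j - b) = τ j := by rw [hτ₂node _ hoc, hij]
      have h2 : τ₂ (2 * j - b + 1) = τ (j + 1) := by
        rw [hτ₂midg (2 * j - b + 1) (by rw [hoc1]; simp) (by rw [hidx]; exact hnbp), hidx]
      rw [h1, h2]
      exact hps

end GTCsec

end Elim
namespace Elim

theorem elim {bad : Rule → Prop} {g1 : Seq → Rule → Seq → Rule} {gM : Seq → Rule → Seq → Seq}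
    {g2 : Seq → Rule → Seq → Rule}
    (hbud : ¬ bad Rule.bud) (hweak : ¬ bad Rule.weak)
    (hprogr : ∀ r, bad r → ∀ j a b, ¬ progStep r j a b)
    (hsingle : ∀ r S prems, bad r → Inf r S prems → ∃ P, prems = [P])
    (hg : GadgetSpec bad g1 gM g2)
    {S0 : Seq} (h : ∃ P : PreProof, P.IsProof ∧ P.Concl S0) :
    ∃ P' : PreProof, P'.IsProof ∧ ¬ usesRule P'.D.label bad ∧ P'.Concl S0 := by
  obtain ⟨P, ⟨T, hT, hGTC⟩, ⟨r0, hc0⟩⟩ := h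
  refine ⟨newP hbud hsingle hg P,
    ⟨Sg bad g1 gM g2 T, ⟨?_, ?_, ?_⟩, Sg_GTC hprogr hg T hGTC⟩,
    Sg_nouses hweak hg P, ?_⟩
  · exact Sg_cond1 hbud P T hT
  · exact Sg_cond2 hbud hg P T hT
  · exact Sg_cond3 hbud hsingle P T hT
  · show ∃ r, Sg bad g1 gM g2 P.D.label [] = some (S0, r)
    have hd : dec ([] : List ℕ) = some (([] : List ℕ), none) := rfl
    rcases nodeL_D (g1 := g1) hbud hsingle P.D hc0 with ⟨_, h2⟩ |
      ⟨_, Pp, rc, _, _, h2⟩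
    · exact ⟨r0, by rw [Sg_eq_node hd]; exact h2⟩
    · exact ⟨g1 S0 r0 Pp, by rw [Sg_eq_node hd]; exact h2⟩

end Elim
namespace Elim

/-- The predicate "is an instance of (= L)". -/
def isEqL (r : Rule) : Prop := ∃ v1 v2 t u, r = Rule.eqL v1 v2 t u

/-- The predicate "is an instance of (= L_a)". -/
def isEqLa (r : Rule) : Prop := ∃ v1 v2 t u, r = Rule.eqLa v1 v2 t u

theorem eqL_single : ∀ r S prems, isEqL r → Inf r S prems → ∃ P, prems = [P] := by
  rintro r S prems ⟨v1, v2, t, u, rfl⟩ hI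
  cases hI
  exact ⟨_, rfl⟩

theorem eqLa_single : ∀ r S prems, isEqLa r → Inf r S prems → ∃ P, prems = [P] := by
  rintro r S prems ⟨v1, v2, t, u, rfl⟩ hI
  cases hI
  exact ⟨_, rfl⟩

theorem eqL_noprog : ∀ r, isEqL r → ∀ j a b, ¬ progStep r j a b := by
  rintro r ⟨v1, v2, t, u, rfl⟩ j a b hp
  exact hp

theorem eqLa_noprog : ∀ r, isEqLa r → ∀ j a b, ¬ progStep r j a b := by
  rintro r ⟨v1, v2, t, u, rfl⟩ j a b hp
  exact hp

theorem eqL_nobud : ¬ isEqL Rule.bud := by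
  rintro ⟨_, _, _, _, hh⟩; exact Rule.noConfusion hh

theorem eqLa_nobud : ¬ isEqLa Rule.bud := by
  rintro ⟨_, _, _, _, hh⟩; exact Rule.noConfusion hh

theorem eqL_noweak : ¬ isEqL Rule.weak := by
  rintro ⟨_, _, _, _, hh⟩; exact Rule.noConfusion hh

theorem eqLa_noweak : ¬ isEqLa Rule.weak := by
  rintro ⟨_, _, _, _, hh⟩; exact Rule.noConfusion hh

/-- Gadget functions replacing (= L) by (= L_a) followed by (Weak). -/
def g1L : Seq → Rule → Seq → Rule := fun _ r _ =>
  match r with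
  | Rule.eqL v1 v2 t u => Rule.eqLa v1 v2 t u
  | _ => Rule.weak

def gML : Seq → Rule → Seq → Seq := fun S r P =>
  match r with
  | Rule.eqL _ _ t u => ⟨insert (Fm.eq t u) P.ant, P.suc⟩
  | _ => S

def g2L : Seq → Rule → Seq → Rule := fun _ _ _ => Rule.weak

theorem gadgetL : GadgetSpec isEqL g1L gML g2L := by
  rintro S r P ⟨v1, v2, t, u, rfl⟩ hI
  cases hI with
  | @eqL Γ Δ =>
    refine ⟨?_, ?_, ?_, ?_, ?_, ?_, ?_⟩
    · exact Inf.eqLa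
    · exact Inf.weak (Finset.subset_insert _ _) (subset_refl _)
    · rintro ⟨_, _, _, _, hh⟩; exact Rule.noConfusion hh
    · rintro ⟨_, _, _, _, hh⟩; exact Rule.noConfusion hh
    · intro hh; exact Rule.noConfusion hh
    · intro hh; exact Rule.noConfusion hh
    · intro τa τb hmem hind hmem' hind' hconn
      refine ⟨τb, ?_, hind', ?_, ?_⟩
      · exact Finset.mem_insert_of_mem hmem'
      · exact hconn
      · show τb = τb
        rfl

end Elim
namespace Elim

theorem exists_fresh (s : Set ℕ) (hs : s.Finite) : ∃ w, w ∉ s := by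
  have h := hs.infinite_compl
  obtain ⟨w, hw⟩ := h.nonempty
  exact ⟨w, hw⟩

theorem image_subst_id {s : Finset Fm} {θ : ℕ → Tm} (h : ∀ φ ∈ s, Fm.subst θ φ = φ) :
    s.image (Fm.subst θ) = s := by
  rw [show s.image (Fm.subst θ) = s.image id from Finset.image_congr h, Finset.image_id]

theorem indAtom_ne_eq {φ : Fm} (h : isIndAtom φ) (a b : Tm) : φ ≠ Fm.eq a b := by
  rcases h with ⟨x, y, z, rfl⟩ | ⟨x, y, z, rfl⟩ <;> intro hh <;> exact Fm.noConfusion hh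

/-- If `x` occurs free in an atom `F` and `θ x = x`, then `x` occurs free in `F.subst θ`. -/
theorem indAtom_subst_fv {F τa : Fm} {θ : ℕ → Tm} (hτ : τa = F.subst θ)
    (hind : isIndAtom τa) {x : ℕ} (hx : x ∈ F.fv) (hθ : θ x = Tm.var x) :
    x ∈ τa.fv := by
  have hxθ : x ∈ (θ x).fv := by rw [hθ]; simp [Tm.fv]
  rcases hind with ⟨a, b, c, h⟩ | ⟨a, b, c, h⟩ <;> subst h <;>
    cases F <;> simp [Fm.subst] at hτ <;>
    · obtain ⟨h1, h2, h3⟩ := hτ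
      subst h1; subst h2; subst h3
      simp only [Fm.fv]
      simp only [Fm.fv] at hx
      rcases hx with (hx | hx) | hx
      · exact Or.inl (Or.inl (Tm.mem_fv_subst hx hxθ))
      · exact Or.inl (Or.inr (Tm.mem_fv_subst hx hxθ))
      · exact Or.inr (Tm.mem_fv_subst hx hxθ)

end Elim
namespace Elim

theorem gadget_a : ∀ S r P, ∃ r1 M r2, isEqLa r → Inf r S [P] →
    Inf r1 S [M] ∧ Inf r2 M [P] ∧ ¬ isEqLa r1 ∧ ¬ isEqLa r2 ∧
    r1 ≠ Rule.bud ∧ r2 ≠ Rule.bud ∧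
    (∀ τ τ', τ ∈ S.ant → isIndAtom τ → τ' ∈ P.ant → isIndAtom τ' → connStep r 0 τ τ' →
      ∃ μ, μ ∈ M.ant ∧ isIndAtom μ ∧ connStep r1 0 τ μ ∧ connStep r2 0 μ τ') := by
  classical
  intro S r P
  by_cases h : isEqLa r ∧ Inf r S [P]
  case neg => exact ⟨Rule.weak, S, Rule.weak, fun hb hI => absurd ⟨hb, hI⟩ h⟩
  case pos =>
  obtain ⟨⟨v1, v2, t, u, rfl⟩, hI⟩ := h
  cases hI with
  | @eqLa Γ Δ =>
  set A := Γ.image (Fm.subst (sub2 v1 v2 t u)) with hAdef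
  set Bt := Δ.image (Fm.subst (sub2 v1 v2 t u)) with hBtdef
  set A' := Γ.image (Fm.subst (sub2 v1 v2 u t)) with hA'def
  set B' := Δ.image (Fm.subst (sub2 v1 v2 u t)) with hB'def
  set big : Finset Fm := (Γ ∪ Δ) ∪ (A ∪ Bt) ∪ (A' ∪ B') with hbigdef
  set pool : Set ℕ := (⋃ φ ∈ (big : Set Fm), Fm.fv φ) ∪ (Tm.fv t ∪ Tm.fv u ∪ {v1, v2})
    with hpooldef
  have hpoolfin : pool.Finite := by
    rw [hpooldef]
    apply Set.Finite.union
    · exact Set.Finite.biUnion big.finite_toSet (fun φ _ => Fm.fv_finite φ)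
    · exact ((Tm.fv_finite t).union (Tm.fv_finite u)).union
        ((Set.finite_singleton v2).insert v1)
  obtain ⟨w, hw⟩ := exists_fresh pool hpoolfin
  obtain ⟨w1, hw1⟩ := exists_fresh (pool ∪ {w}) (hpoolfin.union (Set.finite_singleton w))
  obtain ⟨w2, hw2⟩ := exists_fresh (pool ∪ {w, w1})
    (hpoolfin.union ((Set.finite_singleton w1).insert w))
  have hw1pool : w1 ∉ pool := fun hh => hw1 (Or.inl hh)
  have hw2pool : w2 ∉ pool := fun hh => hw2 (Or.inl hh)
  have hw12 : w2 ≠ w1 := fun hh => hw2 (Or.inr (by simp [hh]))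
  have hv1pool : v1 ∈ pool := by rw [hpooldef]; right; right; simp
  have hv2pool : v2 ∈ pool := by rw [hpooldef]; right; right; simp
  have htpool : ∀ x ∈ Tm.fv t, x ∈ pool := by
    intro x hx; rw [hpooldef]; right; left; left; exact hx
  have hupool : ∀ x ∈ Tm.fv u, x ∈ pool := by
    intro x hx; rw [hpooldef]; right; left; right; exact hx
  have hfvmem : ∀ φ ∈ big, ∀ x ∈ Fm.fv φ, x ∈ pool := by
    intro φ hφ x hx
    rw [hpooldef]
    left
    exact Set.mem_biUnion (Finset.mem_coe.mpr hφ) hx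
  have hbigΓ : ∀ φ ∈ Γ, φ ∈ big := by
    intro φ hh; rw [hbigdef]; simp only [Finset.mem_union]; tauto
  have hbigΔ : ∀ φ ∈ Δ, φ ∈ big := by
    intro φ hh; rw [hbigdef]; simp only [Finset.mem_union]; tauto
  have hbigA : ∀ φ ∈ A, φ ∈ big := by
    intro φ hh; rw [hbigdef]; simp only [Finset.mem_union]; tauto
  have hbigA' : ∀ φ ∈ A', φ ∈ big := by
    intro φ hh; rw [hbigdef]; simp only [Finset.mem_union]; tauto
  have hbigB' : ∀ φ ∈ B', φ ∈ big := by
    intro φ hh; rw [hbigdef]; simp only [Finset.mem_union]; tauto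
  have hwnot : ∀ x, x ∉ pool → ∀ φ ∈ big, x ∉ Fm.fv φ :=
    fun x hx φ hφ hmem => hx (hfvmem φ hφ x hmem)
  -- the (possibly renamed) second variable of the first (= L) instance
  set v2' : ℕ := if v1 = v2 then w else v2 with hv2'def
  have hv1v2' : v1 ≠ v2' := by
    rw [hv2'def]
    split
    · rename_i hvv
      intro hh
      exact hw (hh ▸ hv1pool)
    · rename_i hvv
      exact hvv
  have hagree : ∀ (a b : Tm) (φ : Fm), w ∉ Fm.fv φ →
      Fm.subst (sub2 v1 v2' a b) φ = Fm.subst (sub2 v1 v2 a b) φ := by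
    intro a b φ hwφ
    rw [hv2'def]
    split
    · rename_i hvv
      subst hvv
      apply Fm.subst_congr
      intro x hx
      have hxw : x ≠ w := fun hh => hwφ (hh ▸ hx)
      by_cases hx1 : x = v1 <;> simp [sub2, hx1, hxw]
    · rfl
  have keyΓtu : Γ.image (Fm.subst (sub2 v1 v2' t u)) = A := by
    rw [hAdef]
    exact Finset.image_congr
      (fun φ hφ => hagree t u φ (hwnot w hw φ (hbigΓ φ (Finset.mem_coe.mp hφ))))
  have keyΓut : Γ.image (Fm.subst (sub2 v1 v2' u t)) = A' := by
    rw [hA'def]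
    exact Finset.image_congr
      (fun φ hφ => hagree u t φ (hwnot w hw φ (hbigΓ φ (Finset.mem_coe.mp hφ))))
  have keyΔtu : Δ.image (Fm.subst (sub2 v1 v2' t u)) = Bt := by
    rw [hBtdef]
    exact Finset.image_congr
      (fun φ hφ => hagree t u φ (hwnot w hw φ (hbigΔ φ (Finset.mem_coe.mp hφ))))
  have keyΔut : Δ.image (Fm.subst (sub2 v1 v2' u t)) = B' := by
    rw [hB'def]
    exact Finset.image_congr
      (fun φ hφ => hagree u t φ (hwnot w hw φ (hbigΔ φ (Finset.mem_coe.mp hφ))))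
  refine ⟨Rule.eqL v1 v2' t u, ⟨insert (Fm.eq u t) A', B'⟩, Rule.eqL w1 w2 u t,
    fun _ _ => ⟨?_, ?_, ?_, ?_, ?_, ?_, ?_⟩⟩
  · -- first (= L) step
    have base := @Inf.eqL (insert (Fm.eq (Tm.var v1) (Tm.var v2')) Γ) Δ v1 v2' t u
    rw [Finset.image_insert, Finset.image_insert] at base
    have hGtu : Fm.subst (sub2 v1 v2' t u) (Fm.eq (Tm.var v1) (Tm.var v2')) = Fm.eq t u := by
      have hne : v2' ≠ v1 := fun hh => hv1v2' hh.symm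
      simp [Fm.subst, Tm.subst, sub2, hne]
    have hGut : Fm.subst (sub2 v1 v2' u t) (Fm.eq (Tm.var v1) (Tm.var v2')) = Fm.eq u t := by
      have hne : v2' ≠ v1 := fun hh => hv1v2' hh.symm
      simp [Fm.subst, Tm.subst, sub2, hne]
    rw [hGtu, hGut, keyΓtu, keyΓut, keyΔtu, keyΔut, Finset.insert_idem] at base
    exact base
  · -- second (= L) step
    have hid : ∀ (a b : Tm) (φ : Fm), φ ∈ big → Fm.subst (sub2 w1 w2 a b) φ = φ := by
      intro a b φ hφ
      apply Fm.subst_id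
      intro x hx
      have hx1 : x ≠ w1 := fun hh => (hwnot w1 hw1pool φ hφ) (hh ▸ hx)
      have hx2 : x ≠ w2 := fun hh => (hwnot w2 hw2pool φ hφ) (hh ▸ hx)
      simp [sub2, hx1, hx2]
    have hidA' : ∀ (a b : Tm), A'.image (Fm.subst (sub2 w1 w2 a b)) = A' :=
      fun a b => image_subst_id (fun φ hφ => hid a b φ (hbigA' φ hφ))
    have hidB' : ∀ (a b : Tm), B'.image (Fm.subst (sub2 w1 w2 a b)) = B' :=
      fun a b => image_subst_id (fun φ hφ => hid a b φ (hbigB' φ hφ))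
    have base := @Inf.eqL (insert (Fm.eq (Tm.var w1) (Tm.var w2)) A') B' w1 w2 u t
    rw [Finset.image_insert, Finset.image_insert] at base
    have hG2ut : Fm.subst (sub2 w1 w2 u t) (Fm.eq (Tm.var w1) (Tm.var w2)) = Fm.eq u t := by
      simp [Fm.subst, Tm.subst, sub2, hw12]
    have hG2tu : Fm.subst (sub2 w1 w2 t u) (Fm.eq (Tm.var w1) (Tm.var w2)) = Fm.eq t u := by
      simp [Fm.subst, Tm.subst, sub2, hw12]
    rw [hG2ut, hG2tu, hidA' u t, hidA' t u, hidB' u t, hidB' t u,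
      Finset.insert_idem] at base
    exact base
  · rintro ⟨_, _, _, _, hh⟩; exact Rule.noConfusion hh
  · rintro ⟨_, _, _, _, hh⟩; exact Rule.noConfusion hh
  · intro hh; exact Rule.noConfusion hh
  · intro hh; exact Rule.noConfusion hh
  · -- trace simulation
    intro τa τb hmem hind hmem' hind' hconn
    have hconn' : ∃ F, τa = Fm.subst (sub2 v1 v2 t u) F ∧
        τb = Fm.subst (sub2 v1 v2 u t) F := hconn
    obtain ⟨F, hF1, hF2⟩ := hconn'
    have hτaA : τa ∈ A := by
      rcases Finset.mem_insert.mp hmem with h1 | h1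
      · exact absurd h1 (indAtom_ne_eq hind t u)
      · exact h1
    have hτbA' : τb ∈ A' := by
      rcases Finset.mem_insert.mp hmem' with h1 | h1
      · exact absurd h1 (indAtom_ne_eq hind' t u)
      · exact h1
    have hwv1 : w ≠ v1 := fun hh => hw (hh ▸ hv1pool)
    have hwv2 : w ≠ v2 := fun hh => hw (hh ▸ hv2pool)
    have hwF : w ∉ Fm.fv F := by
      intro hwF
      have hθ : sub2 v1 v2 t u w = Tm.var w := by simp [sub2, hwv1, hwv2]
      have : w ∈ Fm.fv τa := indAtom_subst_fv hF1 hind hwF hθ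
      exact hw (hfvmem τa (hbigA τa hτaA) w this)
    refine ⟨τb, Finset.mem_insert_of_mem hτbA', hind', ?_, ?_⟩
    · show ∃ F', τa = Fm.subst (sub2 v1 v2' t u) F' ∧ τb = Fm.subst (sub2 v1 v2' u t) F'
      refine ⟨F, ?_, ?_⟩
      · rw [hF1, hagree t u F hwF]
      · rw [hF2, hagree u t F hwF]
    · show ∃ F', τb = Fm.subst (sub2 w1 w2 u t) F' ∧ τb = Fm.subst (sub2 w1 w2 t u) F'
      have hidτ : ∀ (a b : Tm), Fm.subst (sub2 w1 w2 a b) τb = τb := by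
        intro a b
        apply Fm.subst_id
        intro x hx
        have hx1 : x ≠ w1 := fun hh => (hwnot w1 hw1pool τb (hbigA' τb hτbA')) (hh ▸ hx)
        have hx2 : x ≠ w2 := fun hh => (hwnot w2 hw2pool τb (hbigA' τb hτbA')) (hh ▸ hx)
        simp [sub2, hx1, hx2]
      exact ⟨τb, (hidτ u t).symm, (hidτ t u).symm⟩

end Elim

/-- `CLKID^ω` and `CLKID^ω_a` prove the same sequents. -/
theorem provable_iff_provable_a (S : Seq) : ProvableW S ↔ ProvableWa S := by
  constructor
  · rintro ⟨P, hproof, hnoa, hconcl⟩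
    obtain ⟨P', hproof', hnouse, hconcl'⟩ :=
      Elim.elim Elim.eqL_nobud Elim.eqL_noweak Elim.eqL_noprog Elim.eqL_single
        Elim.gadgetL ⟨P, hproof, hconcl⟩
    exact ⟨P', hproof', hnouse, hconcl'⟩
  · rintro ⟨P, hproof, hnol, hconcl⟩
    choose gg1 ggM gg2 hgg using Elim.gadget_a
    have hspec : Elim.GadgetSpec Elim.isEqLa gg1 ggM gg2 :=
      fun S r P hb hI => hgg S r P hb hI
    obtain ⟨P', hproof', hnouse, hconcl'⟩ :=
      Elim.elim Elim.eqLa_nobud Elim.eqLa_noweak Elim.eqLa_noprog Elim.eqLa_single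
        hspec ⟨P, hproof, hconcl⟩
    exact ⟨P', hproof', hnouse, hconcl'⟩

end CLKID
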